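/- arXiv:0707.2810 — 8 statements merged into one kernel-verified Lean document; each statement's English description precedes it below -/
import Mathlib

section
/- Let U be the (ℝ×ℝ)-matrix U(s,t) = 1 if s ≥ t and U(s,t) = 0 if s < t. If (H,v,w) is a Gram representation of U (with some finite Gram constant), then the Hilbert space H is not separable, and the maps t ↦ v_t and t ↦ w_t from ℝ to H are discontinuous at every point t ∈ ℝ. -/
/-- if `(H, v, w)` is a Gram representation (with some finite Gram
constant `γ`) of the matrix `U(s,t) = 1[s ≥ t]`, then `H` is not separable and
`t ↦ v t`, `t ↦ w t` are discontinuous at every `t ∈ ℝ`. -/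
theorem stmt3 {H : Type*} [NormedAddCommGroup H] [InnerProductSpace ℂ H] [CompleteSpace H]
    (v w : ℝ → H) (γ : ℝ)
    (hrep : ∀ s t : ℝ, (inner ℂ (v s) (w t) : ℂ) = if t ≤ s then 1 else 0)
    (hb : ∀ s : ℝ, max ‖v s‖ ‖w s‖ ≤ γ) :
    ¬ TopologicalSpace.SeparableSpace H ∧
      (∀ t : ℝ, ¬ ContinuousAt v t) ∧ (∀ t : ℝ, ¬ ContinuousAt w t) := by
  have hγ0 : 0 ≤ γ := le_trans (le_max_of_le_left (norm_nonneg _)) (hb 0)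
  -- separation for v
  have hv : ∀ a b : ℝ, a ≠ b → 1 ≤ γ * ‖v a - v b‖ := by
    have key : ∀ a b : ℝ, b < a → 1 ≤ γ * ‖v a - v b‖ := by
      intro a b hba
      have h1 : (inner ℂ (v a - v b) (w a) : ℂ) = 1 := by
        rw [inner_sub_left, hrep, hrep, if_pos le_rfl, if_neg (not_le.2 hba)]
        ring
      have h2 : (1 : ℝ) = ‖(inner ℂ (v a - v b) (w a) : ℂ)‖ := by rw [h1]; simp
      calc (1 : ℝ) = ‖(inner ℂ (v a - v b) (w a) : ℂ)‖ := h2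
        _ ≤ ‖v a - v b‖ * ‖w a‖ := norm_inner_le_norm _ _
        _ ≤ ‖v a - v b‖ * γ :=
            mul_le_mul_of_nonneg_left (le_trans (le_max_right _ _) (hb a)) (norm_nonneg _)
        _ = γ * ‖v a - v b‖ := mul_comm _ _
    intro a b hab
    rcases hab.lt_or_gt with h | h
    · have := key b a h
      rwa [norm_sub_rev] at this
    · exact key a b h
  -- separation for w
  have hw : ∀ a b : ℝ, a ≠ b → 1 ≤ γ * ‖w a - w b‖ := by
    have key : ∀ a b : ℝ, a < b → 1 ≤ γ * ‖w a - w b‖ := by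
      intro a b hab
      have h1 : (inner ℂ (v a) (w a - w b) : ℂ) = 1 := by
        rw [inner_sub_right, hrep, hrep, if_pos le_rfl, if_neg (not_le.2 hab)]
        ring
      calc (1 : ℝ) = ‖(inner ℂ (v a) (w a - w b) : ℂ)‖ := by rw [h1]; simp
        _ ≤ ‖v a‖ * ‖w a - w b‖ := norm_inner_le_norm _ _
        _ ≤ γ * ‖w a - w b‖ :=
            mul_le_mul_of_nonneg_right (le_trans (le_max_left _ _) (hb a)) (norm_nonneg _)
    intro a b hab
    rcases hab.lt_or_gt with h | h
    · exact key a b h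
    · have := key b a h
      rwa [norm_sub_rev] at this
  have hγ : 0 < γ := by
    rcases hγ0.lt_or_eq with h | h
    · exact h
    · exfalso
      have := hv 0 1 (by norm_num)
      rw [← h] at this
      rw [zero_mul] at this
      linarith
  -- distance lower bound
  have hvd : ∀ a b : ℝ, a ≠ b → 1 / γ ≤ dist (v a) (v b) := by
    intro a b hab
    rw [dist_eq_norm, div_le_iff₀' hγ]
    exact hv a b hab
  have hwd : ∀ a b : ℝ, a ≠ b → 1 / γ ≤ dist (w a) (w b) := by
    intro a b hab
    rw [dist_eq_norm, div_le_iff₀' hγ]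
    exact hw a b hab
  have hε : 0 < 1 / (2 * γ) := by positivity
  refine ⟨?_, ?_, ?_⟩
  · intro hsep
    have hd : Pairwise (Function.onFun Disjoint fun t : ℝ => Metric.ball (v t) (1 / (2 * γ))) := by
      intro a b hab
      apply Metric.ball_disjoint_ball
      have : 1 / (2 * γ) + 1 / (2 * γ) = 1 / γ := by field_simp; norm_num
      rw [this]
      exact hvd a b hab
    have : Countable ℝ :=
      hd.countable_of_isOpen_disjoint (fun t => Metric.isOpen_ball)
        (fun t => Metric.nonempty_ball.2 hε)
    exact not_countable this
  · intro t ht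
    have h2 : Filter.Tendsto v (nhdsWithin t {t}ᶜ) (nhds (v t)) :=
      ht.tendsto.mono_left nhdsWithin_le_nhds
    have h3 := Metric.tendsto_nhds.1 h2 (1 / (2 * γ)) hε
    rcases (h3.and self_mem_nhdsWithin).exists with ⟨s, hs1, hs2⟩
    have := hvd s t hs2
    have hlt : 1 / γ < 1 / (2 * γ) := lt_of_le_of_lt this hs1
    rw [div_lt_div_iff₀ hγ (by positivity)] at hlt
    linarith
  · intro t ht
    have h2 : Filter.Tendsto w (nhdsWithin t {t}ᶜ) (nhds (w t)) :=
      ht.tendsto.mono_left nhdsWithin_le_nhds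
    have h3 := Metric.tendsto_nhds.1 h2 (1 / (2 * γ)) hε
    rcases (h3.and self_mem_nhdsWithin).exists with ⟨s, hs1, hs2⟩
    have := hwd s t hs2
    have hlt : 1 / γ < 1 / (2 * γ) := lt_of_le_of_lt this hs1
    rw [div_lt_div_iff₀ hγ (by positivity)] at hlt
    linarith
end

section
/- Let H be a complex Hilbert space, γ > 0, and let v, w : ℝ → H satisfy ⟪v_s, w_t⟫ = 1 if s ≥ t and ⟪v_s, w_t⟫ = 0 if s < t, together with sup_{s∈ℝ} ‖v_s‖ ≤ γ. Then for all t, t' ∈ ℝ with t ≠ t', one has ‖w_t − w_{t'}‖ ≥ 1/γ. -/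
/-- if `⟪v_s, w_t⟫ = 1` for `s ≥ t`, `= 0` for `s < t`, and `‖v_s‖ ≤ γ`
for all `s`, then `‖w_t − w_{t'}‖ ≥ 1/γ` whenever `t ≠ t'`. -/
theorem stmt4 {H : Type*} [NormedAddCommGroup H] [InnerProductSpace ℂ H] [CompleteSpace H]
    (v w : ℝ → H) (γ : ℝ) (hγ : 0 < γ)
    (hrep : ∀ s t : ℝ, (inner ℂ (v s) (w t) : ℂ) = if t ≤ s then 1 else 0)
    (hb : ∀ s : ℝ, ‖v s‖ ≤ γ) :
    ∀ t t' : ℝ, t ≠ t' → 1 / γ ≤ ‖w t - w t'‖ := by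
  intro t t' hne
  set s := min t t' with hs
  have key : ‖(inner ℂ (v s) (w t - w t') : ℂ)‖ = 1 := by
    rw [inner_sub_right, hrep, hrep]
    rcases lt_or_gt_of_ne hne with h | h
    · rw [if_pos (show t ≤ s from le_min le_rfl h.le),
        if_neg (show ¬ t' ≤ s from not_le.mpr (min_lt_iff.mpr (Or.inl h)))]
      simp
    · rw [if_pos (show t' ≤ s from le_min h.le le_rfl),
        if_neg (show ¬ t ≤ s from not_le.mpr (min_lt_iff.mpr (Or.inr h)))]
      simp
  have cs := norm_inner_le_norm (𝕜 := ℂ) (v s) (w t - w t')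
  rw [key] at cs
  rw [div_le_iff₀ hγ] at *
  calc (1 : ℝ) ≤ ‖v s‖ * ‖w t - w t'‖ := cs
    _ ≤ γ * ‖w t - w t'‖ := by
        apply mul_le_mul_of_nonneg_right (hb s) (norm_nonneg _)
    _ = ‖w t - w t'‖ * γ := mul_comm _ _
end

section
/- Let β > 0, let μ be a nonzero finite Borel measure on ℝ^d, and let E : ℝ^d → ℝ be bounded and measurable. Then the fermionic covariance C (the case h ≡ 1), regarded as an (X_d×X_d)-matrix with X_d = [0,β)×ℝ^d, has no Gram representation (H,v,w) with any finite Gram constant on a separable Hilbert space H. -/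
open MeasureTheory

/-- The Fermi function `f_β(E) = (1+e^{βE})⁻¹`. -/
noncomputable def fermiF (β E : ℝ) : ℝ := (1 + Real.exp (β * E))⁻¹

/-- The function `𝐂(τ,E)`: equal to `−e^{−τE}(1−f_β(E))` for `0 < τ ≤ β` and to
`e^{−τE} f_β(E)` for `−β < τ ≤ 0`, extended `2β`-periodically in `τ`
(the shift `τ - 2β⌈(τ-β)/(2β)⌉` reduces `τ` to the window `(−β, β]`). -/
noncomputable def fermiC (β τ E : ℝ) : ℝ :=
  let τ' := τ - 2 * β * (⌈(τ - β) / (2 * β)⌉ : ℤ)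
  if 0 < τ' then -Real.exp (-τ' * E) * (1 - fermiF β E)
  else Real.exp (-τ' * E) * fermiF β E

/-- The fermionic covariance
`C^{(h)}((t,x),(t',x')) = ∫ h(p) e^{i p·(x−x')} 𝐂(t−t', E(p)) dμ(p)`. -/
noncomputable def fermiCov {d : ℕ} (β : ℝ) (μ : Measure (EuclideanSpace ℝ (Fin d)))
    (E h : EuclideanSpace ℝ (Fin d) → ℝ)
    (x y : ℝ × EuclideanSpace ℝ (Fin d)) : ℂ :=
  ∫ p, (h p : ℂ) * Complex.exp (Complex.I * ((inner ℝ p (x.2 - y.2) : ℝ) : ℂ)) *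
      ((fermiC β (x.1 - y.1) (E p) : ℝ) : ℂ) ∂μ

/-- The covariance as an `(X_d × X_d)`-matrix, `X_d = [0,β) × ℝ^d`. -/
noncomputable def fermiCovMat {d : ℕ} (β : ℝ) (μ : Measure (EuclideanSpace ℝ (Fin d)))
    (E h : EuclideanSpace ℝ (Fin d) → ℝ)
    (x y : ↥(Set.Ico (0 : ℝ) β) × EuclideanSpace ℝ (Fin d)) : ℂ :=
  fermiCov β μ E h (x.1.1, x.2) (y.1.1, y.2)

lemma fermiF_pos (β x : ℝ) : 0 < fermiF β x := by
  unfold fermiF; positivity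

lemma fermiF_le_one (β x : ℝ) : fermiF β x ≤ 1 := by
  unfold fermiF
  rw [inv_le_one_iff₀]
  right
  linarith [Real.exp_pos (β * x)]

lemma ceil_aux (β τ : ℝ) (hβ : 0 < β) (h1 : -β < τ) (h2 : τ ≤ β) :
    (⌈(τ - β) / (2 * β)⌉ : ℤ) = 0 := by
  rw [Int.ceil_eq_zero_iff]
  constructor
  · rw [lt_div_iff₀ (by linarith)]; linarith
  · apply div_nonpos_of_nonpos_of_nonneg <;> linarith

lemma fermiC_zero (β : ℝ) (hβ : 0 < β) (x : ℝ) : fermiC β 0 x = fermiF β x := by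
  unfold fermiC
  rw [ceil_aux β 0 hβ (by linarith) (by linarith)]
  simp

lemma fermiC_pos_tau (β τ x : ℝ) (hβ : 0 < β) (h1 : 0 < τ) (h2 : τ ≤ β) :
    fermiC β τ x = -Real.exp (-τ * x) * (1 - fermiF β x) := by
  unfold fermiC
  rw [ceil_aux β τ hβ (by linarith) h2]
  simp [h1]

lemma fermiC_nonpos (β τ x : ℝ) (hβ : 0 < β) (h1 : 0 < τ) (h2 : τ ≤ β) :
    fermiC β τ x ≤ 0 := by
  rw [fermiC_pos_tau β τ x hβ h1 h2]
  have := fermiF_le_one β x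
  have := Real.exp_pos (-τ * x)
  nlinarith

lemma matval {d : ℕ} (β : ℝ) (μ : Measure (EuclideanSpace ℝ (Fin d)))
    (E : EuclideanSpace ℝ (Fin d) → ℝ) (x0 : EuclideanSpace ℝ (Fin d))
    (a b : ↥(Set.Ico (0 : ℝ) β)) :
    fermiCovMat β μ E (fun _ => 1) (a, x0) (b, x0) =
      ((∫ p, fermiC β (a.1 - b.1) (E p) ∂μ : ℝ) : ℂ) := by
  unfold fermiCovMat fermiCov
  simp only [sub_self, inner_zero_right, Complex.ofReal_zero, mul_zero, Complex.exp_zero,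
    mul_one, one_mul]
  norm_cast
  simp only [one_mul]

/-- Corollary 1 of the paper: for `β > 0`, `μ` a nonzero finite Borel
measure on `ℝ^d` and `E` bounded measurable, the fermionic covariance `C` (the case
`h ≡ 1`), as an `(X_d × X_d)`-matrix with `X_d = [0,β) × ℝ^d`, has no Gram
representation `(H, v, w)` with any finite Gram constant `γ` on a separable
Hilbert space `H`. -/
theorem stmt5 {d : ℕ} (β : ℝ) (hβ : 0 < β)
    (μ : Measure (EuclideanSpace ℝ (Fin d))) [IsFiniteMeasure μ] (hμ : μ ≠ 0)
    (E : EuclideanSpace ℝ (Fin d) → ℝ) (hE : Measurable E) (hEb : ∃ B, ∀ p, |E p| ≤ B)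
    (H : Type*) [NormedAddCommGroup H] [InnerProductSpace ℂ H] [CompleteSpace H]
    [TopologicalSpace.SeparableSpace H]
    (v w : (↥(Set.Ico (0 : ℝ) β) × EuclideanSpace ℝ (Fin d)) → H) (γ : ℝ) :
    ¬ ((∀ x y, fermiCovMat β μ E (fun _ => 1) x y = inner ℂ (v x) (w y)) ∧
        ∀ x, max ‖v x‖ ‖w x‖ ≤ γ) := by
  rintro ⟨hrep, hbd⟩
  obtain ⟨B, hB⟩ := hEb
  set x0 : EuclideanSpace ℝ (Fin d) := 0 with hx0
  set c0 : ℝ := (1 + Real.exp (β * B))⁻¹ with hc0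
  have hc0pos : 0 < c0 := by positivity
  -- the total mass is positive
  have hmass : 0 < (μ Set.univ).toReal := by
    rw [ENNReal.toReal_pos_iff]
    refine ⟨?_, measure_lt_top μ _⟩
    simpa [Measure.measure_univ_eq_zero, pos_iff_ne_zero] using hμ
  set c : ℝ := c0 * (μ Set.univ).toReal with hc
  have hcpos : 0 < c := mul_pos hc0pos hmass
  -- γ ≥ 0
  have hmem0 : (0 : ℝ) ∈ Set.Ico (0 : ℝ) β := ⟨le_refl _, hβ⟩
  have hγ : 0 ≤ γ :=
    le_trans (norm_nonneg _) (le_trans (le_max_left _ _) (hbd (⟨0, hmem0⟩, x0)))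
  -- diagonal lower bound
  have hfint : Integrable (fun p => fermiF β (E p)) μ := by
    have hcont : Continuous (fun x : ℝ => fermiF β x) := by
      unfold fermiF
      exact Continuous.inv₀ (by continuity) (fun x => by positivity)
    refine (integrable_const (1 : ℝ)).mono' ((hcont.measurable.comp hE).aestronglyMeasurable) ?_
    filter_upwards with p
    rw [Real.norm_eq_abs, abs_of_pos (fermiF_pos β (E p))]
    exact fermiF_le_one β (E p)
  have hdiag : ∀ t : ↥(Set.Ico (0 : ℝ) β),
      c ≤ (fermiCovMat β μ E (fun _ => 1) (t, x0) (t, x0)).re := by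
    intro t
    rw [matval, Complex.ofReal_re]
    have h1 : ∀ p, fermiC β (t.1 - t.1) (E p) = fermiF β (E p) := by
      intro p; rw [sub_self, fermiC_zero β hβ]
    rw [show (fun p => fermiC β (t.1 - t.1) (E p)) = fun p => fermiF β (E p) from
      funext h1]
    have hle : ∀ p, c0 ≤ fermiF β (E p) := by
      intro p
      unfold fermiF
      rw [hc0]
      apply inv_anti₀ (by positivity)
      have : E p ≤ B := le_of_abs_le (hB p)
      have : β * E p ≤ β * B := by nlinarith
      linarith [Real.exp_le_exp.2 this]
    calc c = (μ Set.univ).toReal • c0 := by rw [hc, smul_eq_mul, mul_comm]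
    _ = ∫ _, c0 ∂μ := (integral_const c0).symm
    _ ≤ ∫ p, fermiF β (E p) ∂μ := integral_mono (integrable_const c0) hfint hle
  -- off-diagonal nonpositivity
  have hoff : ∀ a b : ↥(Set.Ico (0 : ℝ) β), a.1 < b.1 →
      (fermiCovMat β μ E (fun _ => 1) (b, x0) (a, x0)).re ≤ 0 := by
    intro a b hab
    rw [matval, Complex.ofReal_re]
    apply integral_nonpos
    intro p
    exact fermiC_nonpos β (b.1 - a.1) (E p) hβ (by linarith)
      (by linarith [a.2.1, b.2.2])
  -- pigeonhole: two close w-vectors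
  set ε : ℝ := c / (γ + 1) with hε
  have hεpos : 0 < ε := div_pos hcpos (by linarith)
  obtain ⟨D, hDc, hDd⟩ := TopologicalSpace.exists_countable_dense H
  have hchoice : ∀ t : ↥(Set.Ico (0 : ℝ) β), ∃ z ∈ D, dist (w (t, x0)) z < ε / 2 := by
    intro t
    exact hDd.exists_dist_lt _ (by linarith)
  choose g hgD hglt using hchoice
  have hginj : ¬ Function.Injective g := by
    intro hinj
    have : Countable ↥D := hDc.to_subtype
    have : Countable ↥(Set.Ico (0 : ℝ) β) := by
      have e : ↥(Set.Ico (0 : ℝ) β) ↪ ↥D := ⟨fun t => ⟨g t, hgD t⟩, fun a b hab => by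
        apply hinj; simpa using hab⟩
      exact Function.Embedding.countable e
    have h1 : (Cardinal.mk ↥(Set.Ico (0 : ℝ) β)) ≤ Cardinal.aleph0 :=
      Cardinal.mk_le_aleph0
    rw [Cardinal.mk_Ico_real hβ] at h1
    exact absurd h1 (not_le.2 Cardinal.aleph0_lt_continuum)
  rw [Function.not_injective_iff] at hginj
  obtain ⟨s, t, hgst, hst⟩ := hginj
  have hwst : dist (w (s, x0)) (w (t, x0)) < ε := by
    calc dist (w (s, x0)) (w (t, x0))
        ≤ dist (w (s, x0)) (g s) + dist (g t) (w (t, x0)) := by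
          rw [hgst]; exact dist_triangle _ _ _
    _ < ε / 2 + ε / 2 := by
          have := hglt s
          have := hglt t
          rw [dist_comm (g t)]
          linarith
    _ = ε := by ring
  -- WLOG order: let a < b
  rcases lt_or_gt_of_ne (fun h : s.1 = t.1 => hst (Subtype.ext h)) with hlt | hlt
  case _ =>
    exact absurd rfl (by
      -- main contradiction for s < t
      have hkey : c ≤ γ * ε := by
        have h1 := hdiag t
        have h2 := hoff s t hlt
        have h3 : fermiCovMat β μ E (fun _ => 1) (t, x0) (t, x0) -
            fermiCovMat β μ E (fun _ => 1) (t, x0) (s, x0) =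
            inner ℂ (v (t, x0)) (w (t, x0) - w (s, x0)) := by
          rw [hrep, hrep, inner_sub_right]
        have h4 : c ≤ (inner ℂ (v (t, x0)) (w (t, x0) - w (s, x0)) : ℂ).re := by
          rw [← h3, Complex.sub_re]; linarith
        have h5 : (inner ℂ (v (t, x0)) (w (t, x0) - w (s, x0)) : ℂ).re ≤
            ‖(inner ℂ (v (t, x0)) (w (t, x0) - w (s, x0)) : ℂ)‖ := Complex.re_le_norm _
        have h6 : ‖(inner ℂ (v (t, x0)) (w (t, x0) - w (s, x0)) : ℂ)‖ ≤
            ‖v (t, x0)‖ * ‖w (t, x0) - w (s, x0)‖ := norm_inner_le_norm _ _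
        have h7 : ‖v (t, x0)‖ ≤ γ := le_trans (le_max_left _ _) (hbd _)
        have h8 : ‖w (t, x0) - w (s, x0)‖ ≤ ε := by
          rw [← dist_eq_norm, dist_comm]
          exact le_of_lt hwst
        calc c ≤ ‖v (t, x0)‖ * ‖w (t, x0) - w (s, x0)‖ := by linarith
        _ ≤ γ * ε := mul_le_mul h7 h8 (norm_nonneg _) hγ
      have : γ * ε < c := by
        have h9 : γ * ε = γ / (γ + 1) * c := by rw [hε]; ring
        have h10 : γ / (γ + 1) < 1 := by
          rw [div_lt_one (by linarith)]; linarith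
        rw [h9]
        nlinarith
      exact absurd hkey (not_le.2 this) : (0:ℕ) ≠ 0)
  case _ =>
    exact absurd rfl (by
      have hkey : c ≤ γ * ε := by
        have h1 := hdiag s
        have h2 := hoff t s hlt
        have h3 : fermiCovMat β μ E (fun _ => 1) (s, x0) (s, x0) -
            fermiCovMat β μ E (fun _ => 1) (s, x0) (t, x0) =
            inner ℂ (v (s, x0)) (w (s, x0) - w (t, x0)) := by
          rw [hrep, hrep, inner_sub_right]
        have h4 : c ≤ (inner ℂ (v (s, x0)) (w (s, x0) - w (t, x0)) : ℂ).re := by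
          rw [← h3, Complex.sub_re]; linarith
        have h5 : (inner ℂ (v (s, x0)) (w (s, x0) - w (t, x0)) : ℂ).re ≤
            ‖(inner ℂ (v (s, x0)) (w (s, x0) - w (t, x0)) : ℂ)‖ := Complex.re_le_norm _
        have h6 : ‖(inner ℂ (v (s, x0)) (w (s, x0) - w (t, x0)) : ℂ)‖ ≤
            ‖v (s, x0)‖ * ‖w (s, x0) - w (t, x0)‖ := norm_inner_le_norm _ _
        have h7 : ‖v (s, x0)‖ ≤ γ := le_trans (le_max_left _ _) (hbd _)
        have h8 : ‖w (s, x0) - w (t, x0)‖ ≤ ε := by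
          rw [← dist_eq_norm]
          exact le_of_lt hwst
        calc c ≤ ‖v (s, x0)‖ * ‖w (s, x0) - w (t, x0)‖ := by linarith
        _ ≤ γ * ε := mul_le_mul h7 h8 (norm_nonneg _) hγ
      have : γ * ε < c := by
        have h9 : γ * ε = γ / (γ + 1) * c := by rw [hε]; ring
        have h10 : γ / (γ + 1) < 1 := by
          rw [div_lt_one (by linarith)]; linarith
        rw [h9]
        nlinarith
      exact absurd hkey (not_le.2 this) : (0:ℕ) ≠ 0)
end

section
/- Let (J, ≻) be a linearly ordered set, let φ, φ' : ℕ → J, and let H be a complex Hilbert space. Then for all n ∈ ℕ and all v_1,…,v_n, w_1,…,w_n ∈ H, |det((⟪v_k, w_l⟫ · 1[φ'(k) ≻ φ(l)])_{k,l=1}^n)| ≤ Π_{k=1}^n ‖v_k‖·‖w_k‖. -/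
open scoped BigOperators ComplexConjugate
open Finset

local notation "⟪" x ", " y "⟫" => @inner ℂ _ _ x y

instance (m : ℕ) : WellFoundedLT (Fin m) := inferInstance

section had
variable {m : ℕ}

private lemma norm_gs_le {E : Type*} [NormedAddCommGroup E] [InnerProductSpace ℂ E]
    (f : Fin m → E) (k : Fin m) : ‖InnerProductSpace.gramSchmidt ℂ f k‖ ≤ ‖f k‖ := by
  set g := InnerProductSpace.gramSchmidt ℂ f with hg
  have h1 : ⟪g k, f k⟫ = ⟪g k, g k⟫ := by
    conv_lhs => rw [InnerProductSpace.gramSchmidt_def'' ℂ f k]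
    rw [inner_add_right, ← hg, inner_sum, add_eq_left]
    apply Finset.sum_eq_zero
    intro i hi
    rw [inner_smul_right, InnerProductSpace.gramSchmidt_orthogonal ℂ f (Finset.mem_Iio.mp hi).ne', mul_zero]
  have h2 : ‖g k‖ ^ 2 ≤ ‖g k‖ * ‖f k‖ := by
    have h3 := norm_inner_le_norm (𝕜 := ℂ) (g k) (f k)
    rw [h1, inner_self_eq_norm_sq_to_K] at h3
    simpa using h3
  rcases eq_or_lt_of_le (norm_nonneg (g k)) with h | h
  · rw [← h]; exact norm_nonneg _
  · nlinarith

private lemma hadamard (A : Matrix (Fin m) (Fin m) ℂ) :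
    ‖A.det‖ ≤ ∏ k, Real.sqrt (∑ j, ‖A k j‖ ^ 2) := by
  classical
  set E := EuclideanSpace ℂ (Fin m)
  set f : Fin m → E := fun k => (WithLp.equiv 2 (Fin m → ℂ)).symm (A k) with hf
  set g : Fin m → E := InnerProductSpace.gramSchmidt ℂ f with hg
  set G : Matrix (Fin m) (Fin m) ℂ := Matrix.of (fun k j => g k j) with hG
  set L : Matrix (Fin m) (Fin m) ℂ := Matrix.of (fun k j =>
    if j = k then 1 else if j < k then ⟪g j, f k⟫ / (‖g j‖:ℂ)^2 else 0) with hL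
  have hLkk : ∀ k, L k k = 1 := by intro k; simp [hL]
  have hvec : ∀ k, f k = g k + ∑ i ∈ Finset.Iio k, L k i • g i := by
    intro k
    rw [InnerProductSpace.gramSchmidt_def'' ℂ f k]
    rw [← hg]
    congr 1
    apply Finset.sum_congr rfl
    intro j hj
    have hjk : j < k := Finset.mem_Iio.mp hj
    congr 1
    simp only [hL, Matrix.of_apply, if_neg hjk.ne, if_pos hjk]
    norm_cast
  have hAL : A = L * G := by
    ext k l
    have hfk : A k l = f k l := rfl
    rw [hfk, hvec k, Matrix.mul_apply]
    have hsub : ∑ j : Fin m, L k j * G j l = ∑ j ∈ insert k (Finset.Iio k), L k j * G j l := by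
      refine (Finset.sum_subset (Finset.subset_univ _) ?_).symm
      intro j _ hj
      simp only [Finset.mem_insert, Finset.mem_Iio, not_or, not_lt] at hj
      have hL0 : L k j = 0 := by
        simp only [hL, Matrix.of_apply, if_neg hj.1, if_neg (not_lt.mpr hj.2)]
      rw [hL0, zero_mul]
    rw [hsub, Finset.sum_insert (by simp), hLkk, one_mul]
    have happly : (g k + ∑ i ∈ Finset.Iio k, L k i • g i) l
        = g k l + ∑ i ∈ Finset.Iio k, L k i * g i l := by
      rw [show (g k + ∑ i ∈ Finset.Iio k, L k i • g i) l
          = g k l + (∑ i ∈ Finset.Iio k, L k i • g i) l from rfl]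
      rw [WithLp.ofLp_sum, Finset.sum_apply l]
      exact congrArg _ (Finset.sum_congr rfl (fun i _ => rfl))
    rw [happly]
    rfl
  have hdetLG : A.det = G.det := by
    rw [hAL, Matrix.det_mul]
    have : L.det = 1 := by
      have htri : L.BlockTriangular OrderDual.toDual := by
        intro k j h
        simp only [OrderDual.toDual_lt_toDual] at h
        simp only [hL, Matrix.of_apply, if_neg (ne_of_gt h), if_neg (not_lt.mpr h.le)]
      rw [Matrix.det_of_lowerTriangular L htri]
      exact Finset.prod_eq_one (fun k _ => hLkk k)
    rw [this, one_mul]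
  have hGG : G * G.conjTranspose = Matrix.diagonal (fun k => (‖g k‖:ℂ)^2) := by
    ext k k'
    rw [Matrix.mul_apply]
    have : ∀ j, G k j * G.conjTranspose j k' = (starRingEnd ℂ) ((starRingEnd ℂ) (g k j) * g k' j) := by
      intro j
      simp [Matrix.conjTranspose_apply, hG, mul_comm]
    rw [Finset.sum_congr rfl (fun j _ => this j), ← map_sum]
    have hinner : (∑ j, (starRingEnd ℂ) (g k j) * g k' j) = ⟪g k, g k'⟫ := by
      rw [PiLp.inner_apply]
      simp only [RCLike.inner_apply']
    rw [hinner]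
    by_cases hkk : k = k'
    · subst hkk
      rw [inner_self_eq_norm_sq_to_K]
      simp [Matrix.diagonal_apply_eq]
    · rw [InnerProductSpace.gramSchmidt_orthogonal ℂ f hkk, Matrix.diagonal_apply_ne _ hkk, map_zero]
  have habs2 : (‖G.det‖) ^ 2 = ∏ k, ‖g k‖ ^ 2 := by
    have h1 : G.det * (starRingEnd ℂ) G.det = ((‖G.det‖ : ℝ) : ℂ) ^ 2 := by
      rw [Complex.mul_conj]
      rw [Complex.normSq_eq_norm_sq]
      push_cast
      ring
    have h2 : G.det * (starRingEnd ℂ) G.det = ((∏ k, ‖g k‖ ^ 2 : ℝ) : ℂ) := by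
      have : (starRingEnd ℂ) G.det = G.conjTranspose.det := (Matrix.det_conjTranspose G).symm
      rw [this, ← Matrix.det_mul, hGG, Matrix.det_diagonal]
      push_cast
      rfl
    have := h1.symm.trans h2
    have h3 : (((‖G.det‖) ^ 2 : ℝ) : ℂ) = ((∏ k, ‖g k‖ ^ 2 : ℝ) : ℂ) := by
      push_cast
      exact_mod_cast this
    exact_mod_cast h3
  rw [hdetLG]
  have hnorm : ∀ k, ‖f k‖ = Real.sqrt (∑ j, ‖A k j‖ ^ 2) := by
    intro k
    rw [EuclideanSpace.norm_eq]
    congr 1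
  have hstep : ‖G.det‖ ≤ ∏ k, ‖g k‖ := by
    have hsq : (‖G.det‖) ^ 2 = (∏ k, ‖g k‖) ^ 2 := by
      rw [habs2, ← Finset.prod_pow]
    have h0 : (0:ℝ) ≤ ∏ k, ‖g k‖ := Finset.prod_nonneg (fun k _ => norm_nonneg _)
    nlinarith [norm_nonneg G.det]
  refine hstep.trans ?_
  refine le_trans (Finset.prod_le_prod (fun k _ => norm_nonneg _) (fun k _ => norm_gs_le f k)) ?_
  exact le_of_eq (Finset.prod_congr rfl (fun k _ => hnorm k))
end had

section main
variable {J : Type*} [LinearOrder J] {H : Type*} [NormedAddCommGroup H]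
  [InnerProductSpace ℂ H] [CompleteSpace H]

private lemma key : ∀ (n : ℕ) (φ φ' : Fin n → J) (v w : Fin n → H),
    ‖Matrix.det (Matrix.of fun k l =>
      (inner ℂ (v k) (w l) : ℂ) * (if φ l < φ' k then 1 else 0))‖ ≤
    (∏ k, ‖v k‖) * ∏ l, ‖w l‖ := by
  intro n
  induction n with
  | zero =>
    intro φ φ' v w
    simp [Matrix.det_fin_zero]
  | succ n IH =>
    intro φ φ' v w
    classical
    set M : Matrix (Fin (n+1)) (Fin (n+1)) ℂ := Matrix.of (fun k l =>
      (inner ℂ (v k) (w l) : ℂ) * (if φ l < φ' k then 1 else 0)) with hM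
    have hprodv : (0:ℝ) ≤ ∏ k, ‖v k‖ := Finset.prod_nonneg (fun _ _ => norm_nonneg _)
    have hprodw : (0:ℝ) ≤ ∏ l, ‖w l‖ := Finset.prod_nonneg (fun _ _ => norm_nonneg _)
    obtain ⟨lstar, -, hlstar⟩ := Finset.exists_max_image Finset.univ φ ⟨0, Finset.mem_univ 0⟩
    set K : Finset (Fin (n+1)) := Finset.univ.filter (fun k => φ lstar < φ' k) with hK
    have hmemK : ∀ k, k ∈ K ↔ φ lstar < φ' k := by
      intro k; simp [hK]
    have hfull : ∀ k, k ∈ K → ∀ l, φ l < φ' k := fun k hk l =>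
      lt_of_le_of_lt (hlstar l (Finset.mem_univ l)) ((hmemK k).mp hk)
    by_cases hdep : LinearIndependent ℂ (fun k : ↑K => v ↑k)
    swap
    · -- dependent rows: det = 0
      obtain ⟨c, hc0, i₀, hi₀⟩ := Fintype.not_linearIndependent_iff.mp hdep
      set d : Fin (n+1) → ℂ := fun k => if h : k ∈ K then (starRingEnd ℂ) (c ⟨k, h⟩) else 0 with hd
      have hdne : d ≠ 0 := by
        intro h
        apply hi₀
        have := congrFun h ↑i₀
        simpa [hd, i₀.2, Pi.zero_apply, map_eq_zero] using this
      have hvm : Matrix.vecMul d M = 0 := by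
        funext l
        have hsum : Matrix.vecMul d M l = ∑ k, d k * M k l := rfl
        rw [hsum]
        rw [← Finset.sum_subset (Finset.subset_univ K) (fun k _ hk => by
          simp [hd, dif_neg hk])]
        rw [← Finset.sum_attach K (fun k => d k * M k l)]
        have hterm : ∀ k : ↑K, d ↑k * M ↑k l
            = (inner ℂ ((c k : ℂ) • v ↑k) (w l) : ℂ) := by
          rintro ⟨k, hk⟩
          rw [inner_smul_left]
          simp only [hd, dif_pos hk, hM, Matrix.of_apply, if_pos (hfull k hk l), mul_one]
        rw [Finset.sum_congr rfl (fun k _ => hterm k), ← Finset.univ_eq_attach, ← sum_inner,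
          hc0, inner_zero_left, Pi.zero_apply]
      have : M.det = 0 := Matrix.exists_vecMul_eq_zero_iff.mp ⟨d, hdne, hvm⟩
      rw [this]
      simpa using mul_nonneg hprodv hprodw
    · -- independent case
      set V : Submodule ℂ H := Submodule.span ℂ (Set.range (fun k : ↑K => v ↑k)) with hV
      haveI hfd : FiniteDimensional ℂ V := FiniteDimensional.span_of_finite ℂ (Set.finite_range _)
      have hvK : ∀ k, k ∈ K → v k ∈ V := fun k h => Submodule.subset_span ⟨⟨k, h⟩, rfl⟩
      have hcard : Module.finrank ℂ V = Fintype.card ↑K := by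
        rw [hV, finrank_span_eq_card hdep]
      by_cases hcol : ∀ k, k ∈ K → (inner ℂ (v k) (w lstar) : ℂ) = 0
      · -- column lstar is zero
        have hzero : ∀ k, M k lstar = 0 := by
          intro k
          by_cases hk : k ∈ K
          · simp [hM, hcol k hk]
          · have : ¬ (φ lstar < φ' k) := fun h => hk ((hmemK k).mpr h)
            simp [hM, if_neg this]
        rw [Matrix.det_eq_zero_of_column_eq_zero lstar hzero]
        simpa using mul_nonneg hprodv hprodw
      · push_neg at hcol
        obtain ⟨k₁, hk₁K, hk₁⟩ := hcol
        set u : V := V.orthogonalProjectionOnto (w lstar) with hu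
        have hprojinner : ∀ x : V, (inner ℂ (x : H) (w lstar) : ℂ) = inner ℂ (x : H) (u : H) := by
          intro x
          have horth := Submodule.sub_starProjection_mem_orthogonal (K := V) (w lstar)
          have h0 : (inner ℂ (x : H) (w lstar - (u : H)) : ℂ) = 0 :=
            (Submodule.mem_orthogonal V _).mp horth (x : H) x.2
          rw [inner_sub_right] at h0
          linear_combination (norm := module) h0
        have huinner : (inner ℂ (v k₁) (u : H) : ℂ) ≠ 0 := by
          rw [← hprojinner ⟨v k₁, hvK k₁ hk₁K⟩]
          exact hk₁
        have hu0 : (u : H) ≠ 0 := fun h => huinner (by rw [h, inner_zero_right])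
        set r : ℝ := ‖(u : H)‖ with hr
        have hrpos : 0 < r := by
          rw [hr, norm_pos_iff]
          exact hu0
        set uhat : V := ((r : ℂ))⁻¹ • u with huhat
        have huu : u = (r : ℂ) • uhat := by
          rw [huhat, smul_inv_smul₀]
          exact_mod_cast hrpos.ne'
        have hunorm : ‖u‖ = r := rfl
        have huhatnorm : ‖uhat‖ = 1 := by
          rw [huhat, norm_smul, norm_inv, Complex.norm_real, Real.norm_eq_abs,
            abs_of_pos hrpos, hunorm, inv_mul_cancel₀ hrpos.ne']
        -- orthonormal basis of V with value uhat at k₁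
        have hON : Orthonormal ℂ (Set.restrict {(⟨k₁, hk₁K⟩ : ↑K)} (fun _ : ↑K => uhat)) := by
          constructor
          · intro i
            exact huhatnorm
          · intro i j hij
            exact absurd (Subtype.ext ((Set.mem_singleton_iff.mp i.2).trans
              (Set.mem_singleton_iff.mp j.2).symm)) hij
        obtain ⟨b, hb⟩ := hON.exists_orthonormalBasis_extension_of_card_eq hcard
        have hbk₁ : b ⟨k₁, hk₁K⟩ = uhat := hb _ rfl
        set v' : Fin (n+1) → H := (fun k => if h : k ∈ K then ((b ⟨k, h⟩ : V) : H) else v k)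
          with hv'
        set M' : Matrix (Fin (n+1)) (Fin (n+1)) ℂ := Matrix.of (fun k l =>
          (inner ℂ (v' k) (w l) : ℂ) * (if φ l < φ' k then 1 else 0)) with hM'
        set a : Matrix ↑K ↑K ℂ := (fun k j => (b.repr ⟨v ↑k, hvK ↑k k.2⟩) j) with ha
        have hrepr : ∀ k : ↑K, v ↑k = ∑ j : ↑K, a k j • ((b j : V) : H) := by
          intro k
          have hsum := b.sum_repr ⟨v ↑k, hvK ↑k k.2⟩
          have := congrArg (Submodule.subtype V) hsum
          rw [map_sum] at this
          simpa [ha] using this.symm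
        set L : Matrix (Fin (n+1)) (Fin (n+1)) ℂ := Matrix.of (fun k j =>
          if hk : k ∈ K then (if hj : j ∈ K then (starRingEnd ℂ) (a ⟨k, hk⟩ ⟨j, hj⟩) else 0)
          else (if j = k then 1 else 0)) with hL
        have hdecomp : M = L * M' := by
          ext k l
          rw [Matrix.mul_apply]
          by_cases hk : k ∈ K
          · rw [← Finset.sum_subset (Finset.subset_univ K) (fun j _ hj => by
              simp only [hL, Matrix.of_apply, dif_pos hk, dif_neg hj, zero_mul])]
            rw [← Finset.sum_attach K (fun j => L k j * M' j l)]
            have hterm : ∀ j : ↑K, L k ↑j * M' ↑j l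
                = (inner ℂ ((a ⟨k, hk⟩ j) • ((b j : V) : H)) (w l) : ℂ) := by
              rintro ⟨j, hj⟩
              rw [inner_smul_left]
              simp only [hL, hM', Matrix.of_apply, dif_pos hk, dif_pos hj, hv',
                if_pos (hfull j hj l), mul_one]
            rw [Finset.sum_congr rfl (fun j _ => hterm j), ← Finset.univ_eq_attach,
              ← sum_inner, ← hrepr ⟨k, hk⟩]
            simp only [hM, Matrix.of_apply, if_pos (hfull k hk l), mul_one]
          · have : ∀ j ∈ Finset.univ, j ∉ ({k} : Finset (Fin (n+1))) → L k j * M' j l = 0 := by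
              intro j _ hj
              rw [Finset.mem_singleton] at hj
              simp only [hL, Matrix.of_apply, dif_neg hk, if_neg hj, zero_mul]
            rw [← Finset.sum_subset (Finset.subset_univ {k}) this, Finset.sum_singleton]
            simp only [hL, hM', hM, Matrix.of_apply, dif_neg hk, if_pos rfl, one_mul, hv']
            norm_num
        have hdetL : ‖L.det‖ ≤ ∏ k ∈ K, ‖v k‖ := by
          have he := Matrix.det_submatrix_equiv_self (Equiv.sumCompl (fun k => k ∈ K)) L
          have hblock : L.submatrix (Equiv.sumCompl (fun k => k ∈ K))
                (Equiv.sumCompl (fun k => k ∈ K))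
              = Matrix.fromBlocks (Matrix.of fun k j : ↑K => (starRingEnd ℂ) (a k j)) 0 0 1 := by
            ext kj lj
            cases kj with
            | inl k =>
              cases lj with
              | inl j =>
                simp [hL, Matrix.submatrix_apply, k.2, j.2]
              | inr j =>
                simp [hL, Matrix.submatrix_apply, k.2, j.2]
            | inr k =>
              cases lj with
              | inl j =>
                simp only [Matrix.submatrix_apply, Equiv.sumCompl_apply_inr,
                  Equiv.sumCompl_apply_inl, hL, Matrix.of_apply, dif_neg k.2,
                  Matrix.fromBlocks_apply₂₁, Matrix.zero_apply]
                rw [if_neg]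
                exact fun h => k.2 (h ▸ j.2)
              | inr j =>
                simp only [Matrix.submatrix_apply, Equiv.sumCompl_apply_inr, hL,
                  Matrix.of_apply, dif_neg k.2, Matrix.fromBlocks_apply₂₂, Matrix.one_apply]
                by_cases hjk : (j : Fin (n+1)) = (k : Fin (n+1))
                · rw [if_pos hjk, if_pos (Subtype.ext hjk).symm]
                · rw [if_neg hjk, if_neg (fun h => hjk (congrArg Subtype.val h.symm))]
          have hdetblock : L.det = (starRingEnd ℂ) (Matrix.det a) := by
            rw [← he, hblock, Matrix.det_fromBlocks_zero₂₁, Matrix.det_one, mul_one]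
            have : (Matrix.of fun k j : ↑K => (starRingEnd ℂ) (a k j))
                = a.map (starRingEnd ℂ) := rfl
            rw [this]
            exact (RingHom.map_det (starRingEnd ℂ) a).symm
          rw [hdetblock, Complex.norm_conj]
          -- transport to Fin m and apply hadamard
          set e2 : Fin K.card ≃ ↑K := K.equivFin.symm with he2
          have hdet2 : Matrix.det a = Matrix.det (a.submatrix e2 e2) :=
            (Matrix.det_submatrix_equiv_self e2 a).symm
          rw [hdet2]
          refine le_trans (hadamard _) ?_
          have hterm : ∀ k : Fin K.card,
              Real.sqrt (∑ j, ‖a.submatrix e2 e2 k j‖ ^ 2) = ‖v ↑(e2 k)‖ := by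
            intro k
            have h1 : ∑ j, ‖a.submatrix e2 e2 k j‖ ^ 2
                = ∑ j : ↑K, ‖(b.repr ⟨v ↑(e2 k), hvK _ (e2 k).2⟩) j‖ ^ 2 := by
              refine Fintype.sum_equiv e2 _ _ (fun j => ?_)
              rw [Matrix.submatrix_apply]
            rw [h1]
            have h2 : ‖b.repr ⟨v ↑(e2 k), hvK _ (e2 k).2⟩‖
                = Real.sqrt (∑ j : ↑K, ‖(b.repr ⟨v ↑(e2 k), hvK _ (e2 k).2⟩) j‖ ^ 2) :=
              EuclideanSpace.norm_eq _
            rw [← h2, b.repr.norm_map]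
            rfl
          rw [Finset.prod_congr rfl (fun k _ => hterm k)]
          rw [show (∏ k : Fin K.card, ‖v ↑(e2 k)‖) = ∏ kk : ↑K, ‖v ↑kk‖ from
            Equiv.prod_comp e2 (fun kk => ‖v ↑kk‖)]
          rw [Finset.prod_coe_sort K (fun k => ‖v k‖)]
        -- column structure of M'
        have hcolk₁ : M' k₁ lstar = (r : ℂ) := by
          have h1 : v' k₁ = ((uhat : V) : H) := by simp only [hv']; rw [dif_pos hk₁K, hbk₁]
          simp only [hM', Matrix.of_apply, if_pos (hfull k₁ hk₁K lstar), mul_one, h1]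
          rw [hprojinner uhat, ← Submodule.coe_inner, huu, inner_smul_right,
            inner_self_eq_norm_sq_to_K, huhatnorm]
          norm_num
        have hcol0 : ∀ i, i ≠ k₁ → M' i lstar = 0 := by
          intro i hi
          by_cases hiK : i ∈ K
          · have h1 : v' i = ((b ⟨i, hiK⟩ : V) : H) := by simp only [hv']; rw [dif_pos hiK]
            simp only [hM', Matrix.of_apply, h1]
            rw [hprojinner (b ⟨i, hiK⟩), ← Submodule.coe_inner, huu, inner_smul_right, ← hbk₁]
            rw [b.orthonormal.2 (fun hcon => hi (congrArg Subtype.val hcon))]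
            rw [mul_zero, zero_mul]
          · have : ¬ (φ lstar < φ' i) := fun h => hiK ((hmemK i).mpr h)
            simp only [hM', Matrix.of_apply, if_neg this, mul_zero]
        -- Laplace expansion along column lstar
        have hlap2 : M'.det = (-1 : ℂ)^((k₁ : ℕ) + (lstar : ℕ)) * (r : ℂ)
            * (M'.submatrix k₁.succAbove lstar.succAbove).det := by
          rw [Matrix.det_succ_column M' lstar]
          rw [Finset.sum_eq_single k₁ (fun i _ hi => by rw [hcol0 i hi, mul_zero, zero_mul])
            (fun h => absurd (Finset.mem_univ k₁) h)]
          rw [hcolk₁]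
        have habs' : ‖M'.det‖
            = r * ‖(M'.submatrix k₁.succAbove lstar.succAbove).det‖ := by
          have h1 : ‖(-1 : ℂ)^((k₁ : ℕ) + (lstar : ℕ))‖ = 1 := by
            rw [norm_pow]; simp
          have h2 : ‖(r : ℂ)‖ = r := by
            rw [Complex.norm_real, Real.norm_eq_abs, abs_of_pos hrpos]
          rw [hlap2, norm_mul, norm_mul, h1, h2, one_mul]
        -- induction hypothesis
        have hIH := IH (fun l => φ (lstar.succAbove l)) (fun k => φ' (k₁.succAbove k))
          (fun k => v' (k₁.succAbove k)) (fun l => w (lstar.succAbove l))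
        have hsubeq : M'.submatrix k₁.succAbove lstar.succAbove
            = Matrix.of (fun k l => (inner ℂ (v' (k₁.succAbove k)) (w (lstar.succAbove l)) : ℂ)
              * (if φ (lstar.succAbove l) < φ' (k₁.succAbove k) then 1 else 0)) := rfl
        rw [hsubeq] at habs'
        -- norms of v'
        have hv'mem : ∀ k (h : k ∈ K), ‖v' k‖ = 1 := by
          intro k h
          simp only [hv']
          rw [dif_pos h]
          exact b.orthonormal.1 _
        have hv'not : ∀ k, k ∉ K → v' k = v k := by
          intro k h; simp only [hv']; rw [dif_neg h]
        have hsplitv' : ∏ k, ‖v' k‖ = ∏ k ∈ Finset.univ.filter (· ∉ K), ‖v k‖ := by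
          rw [← Finset.prod_filter_mul_prod_filter_not Finset.univ (· ∈ K) (fun k => ‖v' k‖)]
          rw [Finset.prod_eq_one (fun k hk => hv'mem k (Finset.mem_filter.mp hk).2), one_mul]
          exact Finset.prod_congr rfl (fun k hk => by
            rw [hv'not k (Finset.mem_filter.mp hk).2])
        have hMn : ∏ k : Fin n, ‖v' (k₁.succAbove k)‖
            = ∏ k ∈ Finset.univ.filter (· ∉ K), ‖v k‖ := by
          have hall := Fin.prod_univ_succAbove (fun k => ‖v' k‖) k₁
          rw [hv'mem k₁ hk₁K, one_mul] at hall
          rw [← hall, hsplitv']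
        have hsplitv : (∏ k ∈ K, ‖v k‖) * (∏ k ∈ Finset.univ.filter (· ∉ K), ‖v k‖)
            = ∏ k, ‖v k‖ := by
          rw [← Finset.prod_filter_mul_prod_filter_not Finset.univ (· ∈ K) (fun k => ‖v k‖)]
          congr 1
          apply Finset.prod_congr _ (fun _ _ => rfl)
          ext k
          simp
        have hwprod : ∏ l, ‖w l‖ = ‖w lstar‖ * ∏ l : Fin n, ‖w (lstar.succAbove l)‖ :=
          Fin.prod_univ_succAbove (fun l => ‖w l‖) lstar
        have hrle : r ≤ ‖w lstar‖ := by
          have h1 := Submodule.orthogonalProjectionOnto_norm_le V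
          have h2 := (V.orthogonalProjectionOnto).le_opNorm (w lstar)
          calc r = ‖u‖ := hunorm.symm
            _ ≤ ‖V.orthogonalProjectionOnto‖ * ‖w lstar‖ := h2
            _ ≤ 1 * ‖w lstar‖ := mul_le_mul_of_nonneg_right h1 (norm_nonneg _)
            _ = ‖w lstar‖ := one_mul _
        have hwn : (0:ℝ) ≤ ∏ l : Fin n, ‖w (lstar.succAbove l)‖ :=
          Finset.prod_nonneg (fun _ _ => norm_nonneg _)
        have hKn : (0:ℝ) ≤ ∏ k ∈ K, ‖v k‖ := Finset.prod_nonneg (fun _ _ => norm_nonneg _)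
        calc ‖M.det‖
            = ‖L.det‖ * ‖M'.det‖ := by
              rw [hdecomp, Matrix.det_mul, norm_mul]
          _ ≤ (∏ k ∈ K, ‖v k‖) * ‖M'.det‖ :=
              mul_le_mul_of_nonneg_right hdetL (norm_nonneg _)
          _ = (∏ k ∈ K, ‖v k‖) * (r * ‖Matrix.det (Matrix.of (fun k l =>
                (inner ℂ (v' (k₁.succAbove k)) (w (lstar.succAbove l)) : ℂ)
                * (if φ (lstar.succAbove l) < φ' (k₁.succAbove k) then 1 else 0)))‖) := by
              rw [habs']
          _ ≤ (∏ k ∈ K, ‖v k‖) * (r * ((∏ k : Fin n, ‖v' (k₁.succAbove k)‖)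
                * ∏ l : Fin n, ‖w (lstar.succAbove l)‖)) := by
              refine mul_le_mul_of_nonneg_left ?_ hKn
              exact mul_le_mul_of_nonneg_left hIH hrpos.le
          _ = ((∏ k ∈ K, ‖v k‖) * (∏ k ∈ Finset.univ.filter (· ∉ K), ‖v k‖))
                * (r * ∏ l : Fin n, ‖w (lstar.succAbove l)‖) := by
              rw [hMn]; ring
          _ ≤ (∏ k, ‖v k‖) * (‖w lstar‖ * ∏ l : Fin n, ‖w (lstar.succAbove l)‖) := by
              rw [hsplitv]
              exact mul_le_mul_of_nonneg_left (mul_le_mul_of_nonneg_right hrle hwn) hprodv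
          _ = (∏ k, ‖v k‖) * ∏ l, ‖w l‖ := by rw [← hwprod]
end main

/-- the determinant of the matrix `(⟪v_k, w_l⟫ · 1[φ'(k) ≻ φ(l)])_{k,l}`
is bounded by `∏_k ‖v_k‖·‖w_k‖`. -/
theorem stmt6 {J : Type*} [LinearOrder J] (φ φ' : ℕ → J)
    {H : Type*} [NormedAddCommGroup H] [InnerProductSpace ℂ H] [CompleteSpace H]
    (n : ℕ) (v w : Fin n → H) :
    ‖Matrix.det (Matrix.of fun k l : Fin n =>
        (inner ℂ (v k) (w l) : ℂ) * (if φ (l : ℕ) < φ' (k : ℕ) then 1 else 0))‖ ≤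
      ∏ k : Fin n, ‖v k‖ * ‖w k‖ := by
  have h := key n (fun l : Fin n => φ (l : ℕ)) (fun k : Fin n => φ' (k : ℕ)) v w
  rw [Finset.prod_mul_distrib]
  exact h
end

section
/- Let (J, ≻) be a linearly ordered set, let φ, φ' : ℕ → J, and let H be a complex Hilbert space. Then for all n ∈ ℕ and all v_1,…,v_n, w_1,…,w_n ∈ H, |det((⟪v_k, w_l⟫ · 1[φ'(k) ⪰ φ(l)])_{k,l=1}^n)| ≤ Π_{k=1}^n ‖v_k‖·‖w_k‖. -/
set_option maxHeartbeats 1000000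
open scoped BigOperators
open Matrix

lemma hadamard_on {E : Type*} [NormedAddCommGroup E] [InnerProductSpace ℂ E]
    [FiniteDimensional ℂ E] {d : ℕ} (b : OrthonormalBasis (Fin d) ℂ E) (f : Fin d → E) :
    ‖Matrix.det (Matrix.of fun i j : Fin d => (inner ℂ (b i) (f j) : ℂ))‖ ≤
      ∏ j, ‖f j‖ := by
  have hcard : Module.finrank ℂ E = Fintype.card (Fin d) := by
    rw [Module.finrank_eq_card_basis b.toBasis, Fintype.card_fin]
  haveI : WellFoundedLT (Fin d) := inferInstance
  let g : OrthonormalBasis (Fin d) ℂ E := InnerProductSpace.gramSchmidtOrthonormalBasis hcard f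
  have h1 : (Matrix.of fun i j : Fin d => (inner ℂ (b i) (f j) : ℂ)) = b.toBasis.toMatrix f := by
    ext i j
    simp [Module.Basis.toMatrix_apply, OrthonormalBasis.coe_toBasis_repr_apply,
      OrthonormalBasis.repr_apply_apply]
  have h2 : b.toBasis.toMatrix f = b.toBasis.toMatrix g.toBasis * g.toBasis.toMatrix f :=
    (Module.Basis.toMatrix_mul_toMatrix b.toBasis g.toBasis f).symm
  have h3 : ‖Matrix.det (b.toBasis.toMatrix g.toBasis)‖ = 1 := by
    rw [← Module.Basis.det_apply]
    exact b.det_to_matrix_orthonormalBasis g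
  have h4 : Matrix.det (g.toBasis.toMatrix f) = ∏ i, (inner ℂ (g i) (f i) : ℂ) := by
    rw [← Module.Basis.det_apply]
    exact InnerProductSpace.gramSchmidtOrthonormalBasis_det hcard f
  calc ‖Matrix.det (Matrix.of fun i j : Fin d => (inner ℂ (b i) (f j) : ℂ))‖
      = ‖Matrix.det (b.toBasis.toMatrix g.toBasis)‖ *
        ‖Matrix.det (g.toBasis.toMatrix f)‖ := by
        rw [h1, h2, Matrix.det_mul, norm_mul]
    _ = ‖∏ i, (inner ℂ (g i) (f i) : ℂ)‖ := by rw [h3, h4, one_mul]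
    _ ≤ ∏ j, ‖f j‖ := by
        rw [norm_prod]
        refine Finset.prod_le_prod (fun i _ => norm_nonneg _) (fun i _ => ?_)
        calc ‖(inner ℂ (g i) (f i) : ℂ)‖ ≤ ‖g i‖ * ‖f i‖ := by
              exact norm_inner_le_norm _ _
          _ = ‖f i‖ := by rw [g.orthonormal.1 i, one_mul]

theorem stmt7_aux {J : Type*} [LinearOrder J]
    {H : Type*} [NormedAddCommGroup H] [InnerProductSpace ℂ H] [CompleteSpace H] :
    ∀ (n : ℕ) (φ φ' : ℕ → J) (v w : Fin n → H),
    ‖Matrix.det (Matrix.of fun k l : Fin n =>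
        (inner ℂ (v k) (w l) : ℂ) * (if φ (l : ℕ) ≤ φ' (k : ℕ) then 1 else 0))‖ ≤
      ∏ k : Fin n, ‖v k‖ * ‖w k‖ := by
  intro n
  induction n with
  | zero =>
    intro φ φ' v w
    simp [Matrix.det_isEmpty]
  | succ m ih =>
    intro φ φ' v w
    set M : Matrix (Fin (m+1)) (Fin (m+1)) ℂ := Matrix.of fun k l =>
      (inner ℂ (v k) (w l) : ℂ) * (if φ (l : ℕ) ≤ φ' (k : ℕ) then 1 else 0) with hM
    have hRHS0 : (0:ℝ) ≤ ∏ k : Fin (m+1), ‖v k‖ * ‖w k‖ :=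
      Finset.prod_nonneg fun k _ => mul_nonneg (norm_nonneg _) (norm_nonneg _)
    obtain ⟨k₀, -, hk₀⟩ := Finset.exists_min_image Finset.univ
      (fun k : Fin (m+1) => φ' (k : ℕ)) ⟨0, Finset.mem_univ 0⟩
    set P : Fin (m+1) → Prop := fun l => φ (l : ℕ) ≤ φ' (k₀ : ℕ) with hPdef
    haveI : DecidablePred P := fun l => inferInstanceAs (Decidable (_ ≤ _))
    have hind1 : ∀ (k l : Fin (m+1)), P l →
        (if φ (l:ℕ) ≤ φ' (k:ℕ) then (1:ℂ) else 0) = 1 := by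
      intro k l hl
      exact if_pos (le_trans hl (hk₀ k (Finset.mem_univ k)))
    have hind0 : ∀ (k l : Fin (m+1)), ¬ P l → k = k₀ → M k l = 0 := by
      intro k l hl hk
      subst hk
      simp only [hM, Matrix.of_apply]
      rw [if_neg hl, mul_zero]
    set W : Submodule ℂ H :=
      Submodule.span ℂ (Set.range fun l : {l : Fin (m+1) // P l} => w l) with hW
    haveI : FiniteDimensional ℂ ↥W :=
      FiniteDimensional.span_of_finite ℂ (Set.finite_range _)
    have hwW : ∀ (l : Fin (m+1)), P l → w l ∈ W := fun l hl =>
      Submodule.subset_span ⟨⟨l, hl⟩, rfl⟩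
    by_cases hli : LinearIndependent ℂ (fun l : {l : Fin (m+1) // P l} => w l.1)
    case neg =>
      obtain ⟨g, hg, i, hgi⟩ := Fintype.not_linearIndependent_iff.mp hli
      have hdet : M.det = 0 := by
        rw [← Matrix.exists_mulVec_eq_zero_iff]
        refine ⟨fun l => if h : P l then g ⟨l, h⟩ else 0, ?_, ?_⟩
        · intro h0
          apply hgi
          have h1 := congrFun h0 (i : Fin (m+1))
          simpa [i.2] using h1
        · funext k
          have step1 : ∀ l ∈ Finset.univ, l ∉ Finset.univ.filter P →
              M k l * (if h : P l then g ⟨l, h⟩ else 0) = 0 := by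
            intro l _ hl
            rw [dif_neg (by simpa using hl), mul_zero]
          calc (M *ᵥ fun l => if h : P l then g ⟨l, h⟩ else 0) k
              = ∑ l : Fin (m+1), M k l * (if h : P l then g ⟨l, h⟩ else 0) := by
                simp [Matrix.mulVec, dotProduct]
            _ = ∑ l ∈ Finset.univ.filter P,
                  M k l * (if h : P l then g ⟨l, h⟩ else 0) :=
                (Finset.sum_subset (Finset.filter_subset _ _) step1).symm
            _ = ∑ l : {l : Fin (m+1) // P l},
                  M k (l : Fin (m+1)) * (if h : P (l : Fin (m+1)) then g ⟨l, h⟩ else 0) :=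
                Finset.sum_subtype _ (by simp) _
            _ = ∑ l : {l : Fin (m+1) // P l}, (inner ℂ (v k) (g l • w (l : Fin (m+1))) : ℂ) := by
                refine Finset.sum_congr rfl fun l _ => ?_
                rw [dif_pos l.2, hM]
                simp only [Matrix.of_apply, Subtype.coe_eta]
                rw [hind1 k l l.2, mul_one, inner_smul_right]
                ring
            _ = (inner ℂ (v k) (∑ l : {l : Fin (m+1) // P l}, g l • w (l : Fin (m+1))) : ℂ) :=
                (inner_sum _ _ _).symm
            _ = 0 := by rw [hg, inner_zero_right]
      rw [hdet]
      simpa using hRHS0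
    case pos =>
      haveI : CompleteSpace ↥W := FiniteDimensional.complete ℂ ↥W
      set x : ↥W := W.orthogonalProjectionOnto (v k₀) with hx
      by_cases hx0 : x = 0
      · have hrow : ∀ l, M k₀ l = 0 := by
          intro l
          by_cases hl : P l
          · have hvk : v k₀ ∈ Wᗮ := Submodule.orthogonalProjectionOnto_eq_zero_iff.mp hx0
            have h2 : (inner ℂ (v k₀) (w l) : ℂ) = 0 :=
              Submodule.inner_left_of_mem_orthogonal (hwW l hl) hvk
            simp [hM, h2]
          · exact hind0 k₀ l hl rfl
        rw [Matrix.det_eq_zero_of_row_eq_zero k₀ hrow]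
        simpa using hRHS0
      · have hcard : Module.finrank ℂ ↥W = Fintype.card {l : Fin (m+1) // P l} := by
          rw [hW]
          exact finrank_span_eq_card hli
        have hd0 : 0 < Fintype.card {l : Fin (m+1) // P l} := by
          rcases Nat.eq_zero_or_pos (Fintype.card {l : Fin (m+1) // P l}) with h | h
          · exfalso
            apply hx0
            haveI : Subsingleton ↥W := Module.finrank_zero_iff.mp (by rw [hcard, h])
            exact Subsingleton.elim _ _
          · exact h
        set d := Fintype.card {l : Fin (m+1) // P l} with hd
        set ε : Fin d ≃ {l : Fin (m+1) // P l} := (Fintype.equivFin _).symm with hε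
        set u₁ : ↥W := ((‖x‖ : ℂ))⁻¹ • x with hu₁def
        have hxC : ((‖x‖ : ℂ)) ≠ 0 := by
          exact_mod_cast norm_ne_zero_iff.mpr hx0
        have hu₁ : ‖u₁‖ = 1 := by
          rw [hu₁def, norm_smul]
          rw [norm_inv, Complex.norm_real, Real.norm_eq_abs, abs_norm]
          rw [inv_mul_cancel₀ (norm_ne_zero_iff.mpr hx0)]
        have hxu : ((‖x‖ : ℂ)) • u₁ = x := by
          rw [hu₁def, smul_smul, mul_inv_cancel₀ hxC, one_smul]
        set i₀ : Fin d := ⟨0, hd0⟩ with hi₀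
        have hON : Orthonormal ℂ (Set.restrict {i₀} (fun _ : Fin d => u₁)) := by
          constructor
          · intro i
            exact hu₁
          · intro i j hij
            exfalso
            apply hij
            have hi := i.2
            have hj := j.2
            simp only [Set.mem_singleton_iff] at hi hj
            exact Subtype.ext (hi.trans hj.symm)
        obtain ⟨b, hb⟩ := hON.exists_orthonormalBasis_extension_of_card_eq
          (by rw [hcard, Fintype.card_fin])
        have hbi₀ : b i₀ = u₁ := hb i₀ rfl
        set l₁ : Fin (m+1) := ((ε i₀ : {l : Fin (m+1) // P l}) : Fin (m+1)) with hl₁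
        have hPl₁ : P l₁ := (ε i₀).2
        set wt : Fin (m+1) → H := fun l =>
          if h : P l then ((b (ε.symm ⟨l, h⟩) : ↥W) : H) else w l with hwt
        have hwtnorm1 : ∀ l, P l → ‖wt l‖ = 1 := by
          intro l hl
          rw [hwt]
          dsimp only
          rw [dif_pos hl]
          rw [Submodule.norm_coe]
          exact b.orthonormal.1 _
        have hwteq : ∀ l, ¬ P l → wt l = w l := by
          intro l hl
          rw [hwt]
          exact dif_neg hl
        set N : Matrix (Fin (m+1)) (Fin (m+1)) ℂ := Matrix.of fun k l =>
          (inner ℂ (v k) (wt l) : ℂ) * (if φ (l : ℕ) ≤ φ' (k : ℕ) then 1 else 0) with hN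
        have hproj : ∀ u : ↥W, (inner ℂ ((u : H)) (v k₀) : ℂ) = inner ℂ ((u : H)) ((x : H)) := by
          intro u
          have h1 : v k₀ - (x : H) ∈ Wᗮ :=
            Submodule.sub_starProjection_mem_orthogonal (K := W) (v k₀)
          have h2 := Submodule.inner_right_of_mem_orthogonal u.2 h1
          rw [inner_sub_right] at h2
          exact sub_eq_zero.mp h2
        have hbx : ∀ i : Fin d, i ≠ i₀ → (inner ℂ ((b i : H)) ((x : H)) : ℂ) = 0 := by
          intro i hi
          rw [← Submodule.coe_inner, ← hxu, inner_smul_right, ← hbi₀,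
            b.orthonormal.2 hi, mul_zero]
        have hrowN : ∀ l, l ≠ l₁ → N k₀ l = 0 := by
          intro l hl
          by_cases hPl : P l
          · rw [hN]
            simp only [Matrix.of_apply]
            rw [hind1 k₀ l hPl, mul_one, hwt]
            dsimp only
            rw [dif_pos hPl]
            have hne2 : ε.symm ⟨l, hPl⟩ ≠ i₀ := by
              intro hcon
              apply hl
              have h5 : (⟨l, hPl⟩ : {l : Fin (m+1) // P l}) = ε i₀ := by
                rw [← hcon, Equiv.apply_symm_apply]
              rw [hl₁]
              exact congrArg Subtype.val h5
            rw [← inner_conj_symm, hproj (b (ε.symm ⟨l, hPl⟩)), hbx _ hne2, map_zero]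
          · rw [hN]
            simp only [Matrix.of_apply]
            rw [if_neg hPl, mul_zero]
        set B : Matrix {l : Fin (m+1) // P l} {l : Fin (m+1) // P l} ℂ :=
          Matrix.of fun i j => (inner ℂ ((b (ε.symm i) : H)) (w (j : Fin (m+1))) : ℂ) with hB
        set Emat : Matrix (Fin (m+1)) (Fin (m+1)) ℂ := Matrix.of fun l j =>
          if hl : P l then (if hj : P j then B ⟨l, hl⟩ ⟨j, hj⟩ else 0)
          else (if l = j then 1 else 0) with hE
        have hME : M = N * Emat := by
          ext k j
          rw [Matrix.mul_apply]
          symm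
          by_cases hPj : P j
          · have step1 : ∀ l ∈ Finset.univ, l ∉ Finset.univ.filter P →
                N k l * Emat l j = 0 := by
              intro l _ hl
              have hl' : ¬ P l := by simpa using hl
              rw [hE]
              simp only [Matrix.of_apply]
              rw [dif_neg hl', if_neg (by intro hcon; exact hl' (hcon ▸ hPj)), mul_zero]
            calc ∑ l, N k l * Emat l j
                = ∑ l ∈ Finset.univ.filter P, N k l * Emat l j :=
                  (Finset.sum_subset (Finset.filter_subset _ _) step1).symm
              _ = ∑ i : {l : Fin (m+1) // P l},
                    N k (i : Fin (m+1)) * Emat (i : Fin (m+1)) j :=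
                  Finset.sum_subtype _ (by simp) _
              _ = ∑ i : {l : Fin (m+1) // P l},
                    (inner ℂ (v k) ((b (ε.symm i) : H)) : ℂ) *
                      (inner ℂ ((b (ε.symm i) : H)) (w j) : ℂ) := by
                  refine Finset.sum_congr rfl fun i _ => ?_
                  rw [hN, hE]
                  simp only [Matrix.of_apply]
                  rw [hind1 k i i.2, mul_one, dif_pos i.2, dif_pos hPj, hwt]
                  dsimp only
                  rw [dif_pos i.2, hB]
                  simp only [Matrix.of_apply, Subtype.coe_eta]
              _ = ∑ i : Fin d,
                    (inner ℂ (v k) ((b i : H)) : ℂ) * (inner ℂ ((b i : H)) (w j) : ℂ) :=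
                  Equiv.sum_comp ε.symm
                    (fun i => (inner ℂ (v k) ((b i : H)) : ℂ) * (inner ℂ ((b i : H)) (w j) : ℂ))
              _ = (inner ℂ (v k) (∑ i : Fin d, (inner ℂ ((b i : H)) (w j) : ℂ) • ((b i : H))) : ℂ) := by
                  rw [inner_sum]
                  refine Finset.sum_congr rfl fun i _ => ?_
                  rw [inner_smul_right]
                  ring
              _ = (inner ℂ (v k) (w j) : ℂ) := by
                  congr 1
                  have hsum := b.sum_repr' (⟨w j, hwW j hPj⟩ : ↥W)
                  calc ∑ i : Fin d, (inner ℂ ((b i : H)) (w j) : ℂ) • ((b i : H))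
                      = ((∑ i : Fin d, (inner ℂ (b i) (⟨w j, hwW j hPj⟩ : ↥W) : ℂ) • b i : ↥W) : H) := by
                        push_cast
                        rfl
                    _ = w j := by rw [hsum]
              _ = M k j := by
                  rw [hM]
                  simp only [Matrix.of_apply]
                  rw [hind1 k j hPj, mul_one]
          · rw [Finset.sum_eq_single j ?h0 ?h1]
            · rw [hN, hE, hM]
              simp only [Matrix.of_apply]
              rw [dif_neg hPj]
              simp [hwteq j hPj]
            · intro l _ hl
              rw [hE]
              simp only [Matrix.of_apply]
              by_cases hPl : P l
              · rw [dif_pos hPl, dif_neg hPj, mul_zero]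
              · rw [dif_neg hPl, if_neg hl, mul_zero]
            · intro h
              exact absurd (Finset.mem_univ j) h
        have hEdet : ‖Emat.det‖ ≤ ∏ l ∈ Finset.univ.filter P, ‖w l‖ := by
          have h1 : Emat.det = B.det := by
            rw [← Matrix.det_submatrix_equiv_self (Equiv.sumCompl P) Emat]
            have h7 : Emat.submatrix (Equiv.sumCompl P) (Equiv.sumCompl P) =
                Matrix.fromBlocks B 0 0 1 := by
              ext i j
              rcases i with i | i <;> rcases j with j | j
              · simp only [Matrix.submatrix_apply, Equiv.sumCompl_apply_inl, hE,
                  Matrix.of_apply, Matrix.fromBlocks_apply₁₁, dif_pos i.2, dif_pos j.2,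
                  Subtype.coe_eta]
              · simp only [Matrix.submatrix_apply, Equiv.sumCompl_apply_inl,
                  Equiv.sumCompl_apply_inr, hE, Matrix.of_apply, Matrix.fromBlocks_apply₁₂,
                  dif_pos i.2, dif_neg j.2, Matrix.zero_apply]
              · simp only [Matrix.submatrix_apply, Equiv.sumCompl_apply_inl,
                  Equiv.sumCompl_apply_inr, hE, Matrix.of_apply, Matrix.fromBlocks_apply₂₁,
                  dif_neg i.2, Matrix.zero_apply]
                rw [if_neg]
                intro hcon
                exact i.2 (by rw [hcon]; exact j.2)
              · simp only [Matrix.submatrix_apply, Equiv.sumCompl_apply_inr, hE,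
                  Matrix.of_apply, Matrix.fromBlocks_apply₂₂, dif_neg i.2, Matrix.one_apply]
                by_cases hij : (i : Fin (m+1)) = (j : Fin (m+1))
                · rw [if_pos hij, if_pos (Subtype.ext hij)]
                · rw [if_neg hij, if_neg (fun hcon => hij (congrArg Subtype.val hcon))]
            rw [h7, Matrix.det_fromBlocks_zero₂₁, Matrix.det_one, mul_one]
          rw [h1, ← Matrix.det_submatrix_equiv_self ε B]
          have h3 : B.submatrix ε ε = Matrix.of fun i j : Fin d =>
              (inner ℂ (b i) ((⟨w ((ε j : {l : Fin (m+1) // P l}) : Fin (m+1)),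
                hwW _ (ε j).2⟩ : ↥W)) : ℂ) := by
            ext i j
            simp only [Matrix.submatrix_apply, hB, Matrix.of_apply, Equiv.symm_apply_apply]
            rfl
          rw [h3]
          calc ‖(Matrix.of fun i j : Fin d =>
                (inner ℂ (b i) ((⟨w ((ε j : {l : Fin (m+1) // P l}) : Fin (m+1)),
                  hwW _ (ε j).2⟩ : ↥W)) : ℂ)).det‖
              ≤ ∏ j : Fin d, ‖(⟨w ((ε j : {l : Fin (m+1) // P l}) : Fin (m+1)),
                  hwW _ (ε j).2⟩ : ↥W)‖ := hadamard_on b _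
            _ = ∏ j : Fin d, ‖w ((ε j : {l : Fin (m+1) // P l}) : Fin (m+1))‖ := by
                refine Finset.prod_congr rfl fun j _ => ?_
                rfl
            _ = ∏ i : {l : Fin (m+1) // P l}, ‖w (i : Fin (m+1))‖ :=
                Equiv.prod_comp ε (fun i => ‖w (i : Fin (m+1))‖)
            _ = ∏ l ∈ Finset.univ.filter P, ‖w l‖ :=
                (Finset.prod_subtype (Finset.univ.filter P)
                  (fun x => by simp [Finset.mem_filter]) (fun l => ‖w l‖)).symm
        set φ₂ : ℕ → J := fun i =>
          if h : i < m then φ ((l₁.succAbove ⟨i, h⟩ : Fin (m+1)) : ℕ) else φ 0 with hφ₂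
        set φ'₂ : ℕ → J := fun i =>
          if h : i < m then φ' ((k₀.succAbove ⟨i, h⟩ : Fin (m+1)) : ℕ) else φ' 0 with hφ'₂
        have hminor : N.submatrix k₀.succAbove l₁.succAbove = Matrix.of fun k l : Fin m =>
            (inner ℂ (v (k₀.succAbove k)) (wt (l₁.succAbove l)) : ℂ) *
              (if φ₂ (l : ℕ) ≤ φ'₂ (k : ℕ) then 1 else 0) := by
          ext k l
          simp only [Matrix.submatrix_apply, hN, Matrix.of_apply, hφ₂, hφ'₂]
          rw [dif_pos l.isLt, dif_pos k.isLt]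
        have hminor_le : ‖(N.submatrix k₀.succAbove l₁.succAbove).det‖ ≤
            ∏ k : Fin m, ‖v (k₀.succAbove k)‖ * ‖wt (l₁.succAbove k)‖ := by
          rw [hminor]
          exact ih φ₂ φ'₂ (fun k => v (k₀.succAbove k)) (fun l => wt (l₁.succAbove l))
        have hprodnn : (0:ℝ) ≤ ∏ k : Fin m, ‖v (k₀.succAbove k)‖ * ‖wt (l₁.succAbove k)‖ :=
          Finset.prod_nonneg fun k _ => mul_nonneg (norm_nonneg _) (norm_nonneg _)
        have hNdet : ‖N.det‖ ≤ ‖v k₀‖ *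
            ∏ k : Fin m, ‖v (k₀.succAbove k)‖ * ‖wt (l₁.succAbove k)‖ := by
          rw [Matrix.det_succ_row N k₀]
          have hsingle : (∑ l : Fin (m+1), (-1 : ℂ) ^ ((k₀ : ℕ) + (l : ℕ)) * N k₀ l *
              (N.submatrix k₀.succAbove l.succAbove).det) =
              (-1 : ℂ) ^ ((k₀ : ℕ) + (l₁ : ℕ)) * N k₀ l₁ *
                (N.submatrix k₀.succAbove l₁.succAbove).det :=
            Finset.sum_eq_single l₁
              (fun l _ hl => by rw [hrowN l hl, mul_zero, zero_mul])
              (fun h => absurd (Finset.mem_univ l₁) h)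
          rw [hsingle, norm_mul, norm_mul]
          have habs1 : ‖(-1 : ℂ) ^ ((k₀ : ℕ) + (l₁ : ℕ))‖ = 1 := by
            rw [norm_pow]
            simp
          rw [habs1, one_mul]
          refine mul_le_mul ?_ hminor_le (norm_nonneg _) (norm_nonneg _)
          rw [hN]
          simp only [Matrix.of_apply]
          rw [hind1 k₀ l₁ hPl₁, mul_one]
          calc ‖(inner ℂ (v k₀) (wt l₁) : ℂ)‖ ≤ ‖v k₀‖ * ‖wt l₁‖ := norm_inner_le_norm _ _
            _ = ‖v k₀‖ := by rw [hwtnorm1 l₁ hPl₁, mul_one]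
        have hMdet : ‖M.det‖ = ‖N.det‖ * ‖Emat.det‖ := by
          rw [hME, Matrix.det_mul, norm_mul]
        rw [hMdet]
        have hstep := mul_le_mul hNdet hEdet (norm_nonneg _)
          (mul_nonneg (norm_nonneg _) hprodnn)
        refine le_trans hstep (le_of_eq ?_)
        have e1 : ∏ k : Fin m, ‖v (k₀.succAbove k)‖ * ‖wt (l₁.succAbove k)‖ =
            (∏ k : Fin m, ‖v (k₀.succAbove k)‖) * ∏ k : Fin m, ‖wt (l₁.succAbove k)‖ :=
          Finset.prod_mul_distrib
        have e2 : ∏ k : Fin (m+1), ‖v k‖ = ‖v k₀‖ * ∏ k : Fin m, ‖v (k₀.succAbove k)‖ :=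
          Fin.prod_univ_succAbove (fun k => ‖v k‖) k₀
        have e3 : ∏ k : Fin m, ‖wt (l₁.succAbove k)‖ = ∏ l : Fin (m+1), ‖wt l‖ := by
          rw [Fin.prod_univ_succAbove (fun l => ‖wt l‖) l₁, hwtnorm1 l₁ hPl₁, one_mul]
        have e4 : ∏ l : Fin (m+1), ‖wt l‖ =
            ∏ l ∈ Finset.univ.filter (fun l => ¬ P l), ‖w l‖ := by
          have a1 : ∏ l ∈ Finset.univ.filter P, ‖wt l‖ = 1 :=
            Finset.prod_eq_one fun l hl => hwtnorm1 l (by simpa using hl)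
          have a2 : ∏ l ∈ Finset.univ.filter (fun l => ¬ P l), ‖wt l‖ =
              ∏ l ∈ Finset.univ.filter (fun l => ¬ P l), ‖w l‖ :=
            Finset.prod_congr rfl fun l hl => by rw [hwteq l (by simpa using hl)]
          rw [← Finset.prod_filter_mul_prod_filter_not Finset.univ P (fun l => ‖wt l‖),
            a1, a2, one_mul]
        have e5 : ∏ k : Fin (m+1), ‖v k‖ * ‖w k‖ =
            (∏ k : Fin (m+1), ‖v k‖) * ∏ k : Fin (m+1), ‖w k‖ := Finset.prod_mul_distrib
        have e6 : ∏ k : Fin (m+1), ‖w k‖ =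
            (∏ l ∈ Finset.univ.filter P, ‖w l‖) *
              ∏ l ∈ Finset.univ.filter (fun l => ¬ P l), ‖w l‖ :=
          (Finset.prod_filter_mul_prod_filter_not Finset.univ P (fun l => ‖w l‖)).symm
        rw [e1, e3, e4, e5, e6, e2]
        ring

/-- the determinant of the matrix `(⟪v_k, w_l⟫ · 1[φ'(k) ⪰ φ(l)])_{k,l}`
is bounded by `∏_k ‖v_k‖·‖w_k‖`. -/
theorem stmt7 {J : Type*} [LinearOrder J] (φ φ' : ℕ → J)
    {H : Type*} [NormedAddCommGroup H] [InnerProductSpace ℂ H] [CompleteSpace H]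
    (n : ℕ) (v w : Fin n → H) :
    ‖Matrix.det (Matrix.of fun k l : Fin n =>
        (inner ℂ (v k) (w l) : ℂ) * (if φ (l : ℕ) ≤ φ' (k : ℕ) then 1 else 0))‖ ≤
      ∏ k : Fin n, ‖v k‖ * ‖w k‖ := by
  exact stmt7_aux n φ φ' v w
end

section
/- Let n, k ∈ ℕ and let A^{(1)}, …, A^{(k)} be complex n×n matrices. Suppose that for each l ∈ {1,…,k} there is γ_l > 0 such that the property Π(A^{(l)}, γ_l) holds. Then the property Π(A^{(1)} + ⋯ + A^{(k)}, γ_1 + ⋯ + γ_k) holds. -/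
namespace Stmt8Aux

open Finset Equiv

lemma choose_sq_le (p s : ℕ) : p.choose s * p.choose s ≤ (2 * p).choose (2 * s) := by
  rw [two_mul, two_mul, Nat.add_choose_eq]
  exact Finset.single_le_sum (f := fun ij : ℕ × ℕ => p.choose ij.1 * p.choose ij.2)
    (fun i _ => Nat.zero_le _) (a := (s, s)) (Finset.HasAntidiagonal.mem_antidiagonal.mpr rfl)

lemma sum_bound (p : ℕ) (α β : ℝ) (hα : 0 ≤ α) (hβ : 0 ≤ β) :
    ∑ s ∈ range (p + 1), (p.choose s : ℝ) * ((p.choose s : ℝ) * (α ^ (2 * s) * β ^ (2 * (p - s))))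
      ≤ (α + β) ^ (2 * p) := by
  rw [add_pow]
  calc ∑ s ∈ range (p + 1), (p.choose s : ℝ) * ((p.choose s : ℝ) * (α ^ (2 * s) * β ^ (2 * (p - s))))
      ≤ ∑ s ∈ range (p + 1), α ^ (2 * s) * β ^ (2 * p - 2 * s) * ((2 * p).choose (2 * s) : ℝ) := by
        refine Finset.sum_le_sum fun s hs => ?_
        have hsp : s ≤ p := by simpa using Nat.lt_succ_iff.mp (Finset.mem_range.mp hs)
        have h1 : 2 * (p - s) = 2 * p - 2 * s := by omega
        have hx : (0:ℝ) ≤ α ^ (2 * s) * β ^ (2 * p - 2 * s) := by positivity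
        have hc : (p.choose s : ℝ) * (p.choose s : ℝ) ≤ ((2 * p).choose (2 * s) : ℝ) := by
          exact_mod_cast choose_sq_le p s
        calc (p.choose s : ℝ) * ((p.choose s : ℝ) * (α ^ (2 * s) * β ^ (2 * (p - s))))
            = (α ^ (2 * s) * β ^ (2 * p - 2 * s)) * ((p.choose s : ℝ) * (p.choose s : ℝ)) := by
              rw [h1]; ring
          _ ≤ (α ^ (2 * s) * β ^ (2 * p - 2 * s)) * ((2 * p).choose (2 * s) : ℝ) :=
              mul_le_mul_of_nonneg_left hc hx
          _ = α ^ (2 * s) * β ^ (2 * p - 2 * s) * ((2 * p).choose (2 * s) : ℝ) := by ring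
    _ = ∑ m ∈ (range (p + 1)).image (fun s => 2 * s),
          α ^ m * β ^ (2 * p - m) * ((2 * p).choose m : ℝ) := by
        rw [Finset.sum_image (by intro x _ y _ h; simp only at h; omega)]
    _ ≤ ∑ m ∈ range (2 * p + 1), α ^ m * β ^ (2 * p - m) * ((2 * p).choose m : ℝ) := by
        refine Finset.sum_le_sum_of_subset_of_nonneg ?_ (fun m _ _ => by positivity)
        intro m hm
        simp only [Finset.mem_image, Finset.mem_range] at hm ⊢
        omega
variable {p s t : ℕ}

/-- Equiv `Fin s ⊕ Fin t ≃ Fin p` built from a finset `S` of card `s` with complement of card `t`. -/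
noncomputable def finSumEquiv (S : Finset (Fin p)) (hs : S.card = s) (hsc : Sᶜ.card = t) :
    Fin s ⊕ Fin t ≃ Fin p :=
  Equiv.ofBijective (Sum.elim (S.orderEmbOfFin hs) (Sᶜ.orderEmbOfFin hsc)) <| by
    constructor
    · rintro (i | i) (j | j) h <;> simp only [Sum.elim_inl, Sum.elim_inr] at h
      · exact congrArg Sum.inl ((S.orderEmbOfFin hs).injective h)
      · exact absurd (h ▸ S.orderEmbOfFin_mem hs i)
          (Finset.mem_compl.mp (Sᶜ.orderEmbOfFin_mem hsc j))
      · exact absurd ((h.symm) ▸ S.orderEmbOfFin_mem hs j)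
          (Finset.mem_compl.mp (Sᶜ.orderEmbOfFin_mem hsc i))
      · exact congrArg Sum.inr ((Sᶜ.orderEmbOfFin hsc).injective h)
    · intro x
      by_cases hx : x ∈ S
      · obtain ⟨i, hi⟩ := Set.ext_iff.mp (S.range_orderEmbOfFin hs) x |>.mpr hx
        exact ⟨Sum.inl i, hi⟩
      · obtain ⟨i, hi⟩ := Set.ext_iff.mp (Sᶜ.range_orderEmbOfFin hsc) x |>.mpr
          (Finset.mem_compl.mpr hx)
        exact ⟨Sum.inr i, hi⟩

@[simp] lemma finSumEquiv_inl (S : Finset (Fin p)) (hs : S.card = s) (hsc : Sᶜ.card = t) (i : Fin s) :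
    finSumEquiv S hs hsc (Sum.inl i) = S.orderEmbOfFin hs i := rfl

@[simp] lemma finSumEquiv_inr (S : Finset (Fin p)) (hs : S.card = s) (hsc : Sᶜ.card = t) (i : Fin t) :
    finSumEquiv S hs hsc (Sum.inr i) = Sᶜ.orderEmbOfFin hsc i := rfl

lemma det_apply'' {m : ℕ} (N : Matrix (Fin m) (Fin m) ℂ) :
    N.det = ∑ σ : Perm (Fin m), ((Equiv.Perm.sign σ : ℤ) : ℂ) * ∏ i, N i (σ i) := by
  rw [← Matrix.det_transpose, Matrix.det_apply']
  rfl

lemma group_sum_factor (M MA MB : Matrix (Fin p) (Fin p) ℂ)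
    (S T : Finset (Fin p)) (hs : S.card = s) (hsc : Sᶜ.card = t)
    (hT : T.card = s) (hTc : Tᶜ.card = t)
    (hMA : ∀ i ∈ S, ∀ j, M i j = MA i j) (hMB : ∀ i ∈ Sᶜ, ∀ j, M i j = MB i j) :
    ∃ u : ℂ, ‖u‖ = 1 ∧
      ∑ σ ∈ univ.filter (fun σ : Perm (Fin p) => S.image σ = T),
          ((Equiv.Perm.sign σ : ℤ) : ℂ) * ∏ i, M i (σ i)
        = u * ((MA.submatrix (S.orderEmbOfFin hs) (T.orderEmbOfFin hT)).det *
               (MB.submatrix (Sᶜ.orderEmbOfFin hsc) (Tᶜ.orderEmbOfFin hTc)).det) := by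
  classical
  set cS := S.orderEmbOfFin hs with hcS
  set cS' := Sᶜ.orderEmbOfFin hsc with hcS'
  set cT := T.orderEmbOfFin hT with hcT
  set cT' := Tᶜ.orderEmbOfFin hTc with hcT'
  set E : Fin s ⊕ Fin t ≃ Fin p := finSumEquiv S hs hsc with hE
  set E' : Fin s ⊕ Fin t ≃ Fin p := finSumEquiv T hT hTc with hE'
  set σ₀ : Perm (Fin p) := E.symm.trans E' with hσ₀
  set Φ : Perm (Fin s) × Perm (Fin t) → Perm (Fin p) :=
    fun τρ => E.symm.trans ((Equiv.sumCongr τρ.1 τρ.2).trans E') with hΦdef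
  have habs : ‖((Equiv.Perm.sign σ₀ : ℤ) : ℂ)‖ = 1 := by
    rcases Int.units_eq_one_or (Equiv.Perm.sign σ₀) with h | h <;> simp [h]
  refine ⟨((Equiv.Perm.sign σ₀ : ℤ) : ℂ), habs, ?_⟩
  -- the image of `S` under `Φ τρ` is `T`
  have hmemS : ∀ i, cS i ∈ S := fun i => S.orderEmbOfFin_mem hs i
  have hmemS' : ∀ i, cS' i ∉ S := fun i => Finset.mem_compl.mp (Sᶜ.orderEmbOfFin_mem hsc i)
  have hmemT : ∀ i, cT i ∈ T := fun i => T.orderEmbOfFin_mem hT i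
  have hmemT' : ∀ i, cT' i ∉ T := fun i => Finset.mem_compl.mp (Tᶜ.orderEmbOfFin_mem hTc i)
  have hrangeS : ∀ x ∈ S, ∃ i, cS i = x := fun x hx =>
    Set.ext_iff.mp (S.range_orderEmbOfFin hs) x |>.mpr hx
  have hΦinl : ∀ (τρ : Perm (Fin s) × Perm (Fin t)) (i : Fin s),
      Φ τρ (cS i) = cT (τρ.1 i) := by
    intro τρ i
    show (E.symm.trans ((Equiv.sumCongr τρ.1 τρ.2).trans E')) (E (Sum.inl i)) = _
    simp only [Equiv.trans_apply, Equiv.symm_apply_apply, Equiv.sumCongr_apply, Sum.map_inl]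
    rfl
  have hΦinr : ∀ (τρ : Perm (Fin s) × Perm (Fin t)) (i : Fin t),
      Φ τρ (cS' i) = cT' (τρ.2 i) := by
    intro τρ i
    show (E.symm.trans ((Equiv.sumCongr τρ.1 τρ.2).trans E')) (E (Sum.inr i)) = _
    simp only [Equiv.trans_apply, Equiv.symm_apply_apply, Equiv.sumCongr_apply, Sum.map_inr]
    rfl
  have hΦmem : ∀ τρ, Φ τρ ∈ univ.filter (fun σ : Perm (Fin p) => S.image σ = T) := by
    intro τρ
    rw [Finset.mem_filter]
    refine ⟨Finset.mem_univ _, Finset.eq_of_subset_of_card_le ?_ ?_⟩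
    · intro y hy
      obtain ⟨x, hx, rfl⟩ := Finset.mem_image.mp hy
      obtain ⟨i, rfl⟩ := hrangeS x hx
      rw [hΦinl]; exact hmemT _
    · rw [Finset.card_image_of_injective _ (Φ τρ).injective, hs, hT]
  -- sign of `Φ τρ`
  have hsign : ∀ τρ : Perm (Fin s) × Perm (Fin t),
      Equiv.Perm.sign (Φ τρ) = Equiv.Perm.sign σ₀ * (Equiv.Perm.sign τρ.1 * Equiv.Perm.sign τρ.2) := by
    intro τρ
    have h1 : Φ τρ = σ₀ * (E.permCongr (Equiv.sumCongr τρ.1 τρ.2)) := by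
      ext x
      simp [hΦdef, hσ₀, Equiv.permCongr_apply, Equiv.Perm.mul_apply]
    rw [h1, map_mul, Equiv.Perm.sign_permCongr, Equiv.Perm.sign_sumCongr]
  -- the bijection
  have hbij : ∑ τρ : Perm (Fin s) × Perm (Fin t),
      ((Equiv.Perm.sign σ₀ : ℤ) : ℂ) *
        ((((Equiv.Perm.sign τρ.1 : ℤ) : ℂ) * ∏ i, MA (cS i) (cT (τρ.1 i))) *
         (((Equiv.Perm.sign τρ.2 : ℤ) : ℂ) * ∏ j, MB (cS' j) (cT' (τρ.2 j))))
      = ∑ σ ∈ univ.filter (fun σ : Perm (Fin p) => S.image σ = T),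
          ((Equiv.Perm.sign σ : ℤ) : ℂ) * ∏ i, M i (σ i) := by
    refine Finset.sum_bij (fun τρ _ => Φ τρ) (fun τρ _ => hΦmem τρ) ?_ ?_ ?_
    · -- injective
      intro τρ _ τρ' _ h
      have hg : ∀ x, (Equiv.sumCongr τρ.1 τρ.2) x = (Equiv.sumCongr τρ'.1 τρ'.2) x := by
        intro x
        have := congrArg (fun σ : Perm (Fin p) => σ (E x)) h
        simpa [hΦdef, E'.injective.eq_iff] using this
      refine Prod.ext (Equiv.ext fun i => ?_) (Equiv.ext fun i => ?_)
      · simpa using hg (Sum.inl i)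
      · simpa using hg (Sum.inr i)
    · -- surjective
      intro σ hσ
      have himage : S.image σ = T := (Finset.mem_filter.mp hσ).2
      have hiff : ∀ x, x ∈ S ↔ σ x ∈ T := by
        intro x
        constructor
        · intro hx; rw [← himage]; exact Finset.mem_image_of_mem σ hx
        · intro hx
          rw [← himage] at hx
          obtain ⟨y, hy, hxy⟩ := Finset.mem_image.mp hx
          rwa [← σ.injective hxy]
      have hiff' : ∀ x, x ∈ Sᶜ ↔ σ x ∈ Tᶜ := by
        intro x
        simp only [Finset.mem_compl]
        exact not_congr (hiff x)
      set τ : Perm (Fin s) :=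
        ((S.orderIsoOfFin hs).toEquiv.trans ((σ.subtypeEquiv hiff).trans
          (T.orderIsoOfFin hT).toEquiv.symm)) with hτ
      set ρ : Perm (Fin t) :=
        ((Sᶜ.orderIsoOfFin hsc).toEquiv.trans ((σ.subtypeEquiv hiff').trans
          (Tᶜ.orderIsoOfFin hTc).toEquiv.symm)) with hρ
      refine ⟨(τ, ρ), Finset.mem_univ _, ?_⟩
      refine Equiv.ext fun x => ?_
      obtain ⟨u, rfl⟩ := E.surjective x
      have hΦu : Φ (τ, ρ) (E u) = E' ((Equiv.sumCongr τ ρ) u) := by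
        simp [hΦdef]
      rw [hΦu]
      cases u with
      | inl i =>
        show E' (Sum.inl (τ i)) = σ (cS i)
        have : (E' (Sum.inl (τ i))) = cT (τ i) := rfl
        rw [this, hτ]
        simp only [Equiv.trans_apply, Equiv.subtypeEquiv_apply, OrderIso.toEquiv_symm,
          RelIso.coe_fn_toEquiv]
        have hcoe : ((S.orderIsoOfFin hs) i : Fin p) = cS i := by
          rw [hcS, Finset.coe_orderIsoOfFin_apply]
        rw [show cT = fun j => ((T.orderIsoOfFin hT) j : Fin p) from ?_]
        · simp only []
          exact (congrArg Subtype.val ((T.orderIsoOfFin hT).apply_symm_apply _)).trans (by simp [hcoe])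
        · funext j
          rw [hcT, Finset.coe_orderIsoOfFin_apply]
      | inr i =>
        show E' (Sum.inr (ρ i)) = σ (cS' i)
        have : (E' (Sum.inr (ρ i))) = cT' (ρ i) := rfl
        rw [this, hρ]
        simp only [Equiv.trans_apply, Equiv.subtypeEquiv_apply, OrderIso.toEquiv_symm,
          RelIso.coe_fn_toEquiv]
        have hcoe : ((Sᶜ.orderIsoOfFin hsc) i : Fin p) = cS' i := by
          rw [hcS', Finset.coe_orderIsoOfFin_apply]
        rw [show cT' = fun j => ((Tᶜ.orderIsoOfFin hTc) j : Fin p) from ?_]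
        · simp only []
          exact (congrArg Subtype.val ((Tᶜ.orderIsoOfFin hTc).apply_symm_apply _)).trans (by simp [hcoe])
        · funext j
          rw [hcT', Finset.coe_orderIsoOfFin_apply]
    · -- values agree
      intro τρ _
      have hprod : ∏ i, M i (Φ τρ i)
          = (∏ i, MA (cS i) (cT (τρ.1 i))) * ∏ j, MB (cS' j) (cT' (τρ.2 j)) := by
        rw [← Equiv.prod_comp E (fun i => M i (Φ τρ i)), Fintype.prod_sum_type]
        congr 1
        · refine Finset.prod_congr rfl fun i _ => ?_
          have h1 : E (Sum.inl i) = cS i := rfl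
          rw [h1, hΦinl]
          exact hMA _ (hmemS i) _
        · refine Finset.prod_congr rfl fun j _ => ?_
          have h1 : E (Sum.inr j) = cS' j := rfl
          rw [h1, hΦinr]
          exact hMB _ (Finset.mem_compl.mpr (hmemS' j)) _
      rw [hprod, hsign τρ]
      push_cast
      ring
  rw [← hbij, Fintype.sum_prod_type]
  rw [det_apply'', det_apply'', Finset.sum_mul_sum, Finset.mul_sum]
  refine Finset.sum_congr rfl fun τ _ => ?_
  rw [Finset.mul_sum]
  refine Finset.sum_congr rfl fun ρ _ => ?_
  simp only [Matrix.submatrix_apply]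

lemma det_piecewise_bound {p : ℕ} (MA MB : Matrix (Fin p) (Fin p) ℂ) (α β : ℝ)
    (hα : 0 ≤ α) (hβ : 0 ≤ β)
    (hA : ∀ (s : ℕ) (c d : Fin s → Fin p), StrictMono c → StrictMono d →
      ‖(MA.submatrix c d).det‖ ≤ α ^ (2 * s))
    (hB : ∀ (s : ℕ) (c d : Fin s → Fin p), StrictMono c → StrictMono d →
      ‖(MB.submatrix c d).det‖ ≤ β ^ (2 * s))
    (S : Finset (Fin p)) :
    ‖(Matrix.det (Matrix.of fun q r => if q ∈ S then MA q r else MB q r))‖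
      ≤ (p.choose S.card : ℝ) * (α ^ (2 * S.card) * β ^ (2 * (p - S.card))) := by
  classical
  set M : Matrix (Fin p) (Fin p) ℂ :=
    Matrix.of fun q r => if q ∈ S then MA q r else MB q r with hM
  have hsc : Sᶜ.card = p - S.card := by
    rw [Finset.card_compl, Fintype.card_fin]
  have hmaps : ∀ σ : Perm (Fin p), σ ∈ (univ : Finset (Perm (Fin p))) →
      S.image ⇑σ ∈ (univ : Finset (Fin p)).powersetCard S.card := by
    intro σ _
    rw [Finset.mem_powersetCard]
    exact ⟨Finset.subset_univ _, Finset.card_image_of_injective _ σ.injective⟩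
  have hdet : M.det = ∑ T ∈ (univ : Finset (Fin p)).powersetCard S.card,
      ∑ σ ∈ univ.filter (fun σ : Perm (Fin p) => S.image ⇑σ = T),
        ((Equiv.Perm.sign σ : ℤ) : ℂ) * ∏ i, M i (σ i) := by
    rw [det_apply'', ← Finset.sum_fiberwise_of_maps_to hmaps]
  rw [hdet]
  calc ‖(∑ T ∈ (univ : Finset (Fin p)).powersetCard S.card,
        ∑ σ ∈ univ.filter (fun σ : Perm (Fin p) => S.image ⇑σ = T),
          ((Equiv.Perm.sign σ : ℤ) : ℂ) * ∏ i, M i (σ i))‖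
      ≤ ∑ T ∈ (univ : Finset (Fin p)).powersetCard S.card,
        ‖(∑ σ ∈ univ.filter (fun σ : Perm (Fin p) => S.image ⇑σ = T),
          ((Equiv.Perm.sign σ : ℤ) : ℂ) * ∏ i, M i (σ i))‖ :=
        norm_sum_le _ _
    _ ≤ ∑ _T ∈ (univ : Finset (Fin p)).powersetCard S.card,
          α ^ (2 * S.card) * β ^ (2 * (p - S.card)) := by
        refine Finset.sum_le_sum fun T hTmem => ?_
        have hT : T.card = S.card := (Finset.mem_powersetCard.mp hTmem).2
        have hTc : Tᶜ.card = p - S.card := by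
          rw [Finset.card_compl, Fintype.card_fin, hT]
        obtain ⟨u, hu, heq⟩ := group_sum_factor M MA MB S T rfl hsc hT hTc
          (fun i hi j => by simp [hM, hi])
          (fun i hi j => by simp [hM, Finset.mem_compl.mp hi])
        rw [heq, norm_mul, hu, one_mul, norm_mul]
        exact mul_le_mul
          (hA _ _ _ (S.orderEmbOfFin rfl).strictMono (T.orderEmbOfFin hT).strictMono)
          (hB _ _ _ (Sᶜ.orderEmbOfFin hsc).strictMono (Tᶜ.orderEmbOfFin hTc).strictMono)
          (norm_nonneg _) (by positivity)
    _ = (p.choose S.card : ℝ) * (α ^ (2 * S.card) * β ^ (2 * (p - S.card))) := by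
        rw [Finset.sum_const, Finset.card_powersetCard, Finset.card_univ, Fintype.card_fin,
          nsmul_eq_mul]

end Stmt8Aux

/-- The property `Π(A, γ)`: for every `p ∈ {1,…,n}`, all strictly increasing index
sequences `a`, `b` of length `p` in `{1,…,n}` and all vectors `v₁,…,v_p, w₁,…,w_p`
in the closed unit ball of `ℂⁿ`, `|det((⟪v_q, w_r⟫·A_{a_q,b_r})_{q,r})| ≤ γ^(2p)`. -/
def PropPi (n : ℕ) (A : Matrix (Fin n) (Fin n) ℂ) (γ : ℝ) : Prop :=
  ∀ (p : ℕ), 1 ≤ p → p ≤ n → ∀ (a b : Fin p → Fin n), StrictMono a → StrictMono b →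
    ∀ (v w : Fin p → EuclideanSpace ℂ (Fin n)),
      (∀ q, ‖v q‖ ≤ 1) → (∀ q, ‖w q‖ ≤ 1) →
      ‖(Matrix.det (Matrix.of fun q r =>
        (inner ℂ (v q) (w r) : ℂ) * A (a q) (b r)))‖ ≤ γ ^ (2 * p)

namespace Stmt8Aux

open Finset Equiv

lemma piTwo {n : ℕ} {A B : Matrix (Fin n) (Fin n) ℂ} {α β : ℝ}
    (hα : 0 ≤ α) (hβ : 0 ≤ β) (hA : PropPi n A α) (hB : PropPi n B β) :
    PropPi n (A + B) (α + β) := by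
  intro p hp hpn a b ha hb v w hv hw
  classical
  set MA : Matrix (Fin p) (Fin p) ℂ :=
    Matrix.of fun q r => (inner ℂ (v q) (w r) : ℂ) * A (a q) (b r) with hMA
  set MB : Matrix (Fin p) (Fin p) ℂ :=
    Matrix.of fun q r => (inner ℂ (v q) (w r) : ℂ) * B (a q) (b r) with hMB
  have hsub : ∀ (C : Matrix (Fin n) (Fin n) ℂ) (δ : ℝ), PropPi n C δ →
      ∀ (s : ℕ) (c d : Fin s → Fin p), StrictMono c → StrictMono d →
      ‖((Matrix.of fun q r => (inner ℂ (v q) (w r) : ℂ) * C (a q) (b r)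
        : Matrix (Fin p) (Fin p) ℂ).submatrix c d).det‖ ≤ δ ^ (2 * s) := by
    intro C δ hC s c d hc hd
    rcases Nat.eq_zero_or_pos s with rfl | hs
    · rw [Matrix.det_isEmpty]
      simp
    · have hsp : s ≤ p := by
        have := Fintype.card_le_of_injective c hc.injective
        simpa using this
      exact hC s hs (hsp.trans hpn) (a ∘ c) (b ∘ d) (ha.comp hc) (hb.comp hd)
        (v ∘ c) (w ∘ d) (fun q => hv _) (fun q => hw _)
  have hsubA := hsub A α hA
  have hsubB := hsub B β hB
  have hexpand : (Matrix.of fun q r => (inner ℂ (v q) (w r) : ℂ) * (A + B) (a q) (b r)).det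
      = ∑ S : Finset (Fin p),
          (Matrix.of fun q r => if q ∈ S then MA q r else MB q r).det := by
    have h1 : (Matrix.of fun q r => (inner ℂ (v q) (w r) : ℂ) * (A + B) (a q) (b r))
        = MA + MB := by
      ext q r
      simp [hMA, hMB, Matrix.add_apply, mul_add]
    rw [h1]
    show Matrix.detRowAlternating
        ((fun q => MA q) + (fun q => MB q) : Fin p → Fin p → ℂ) = _
    rw [show (Matrix.detRowAlternating
          ((fun q => MA q) + (fun q => MB q) : Fin p → Fin p → ℂ) : ℂ)
        = Matrix.detRowAlternating.toMultilinearMap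
            ((fun q => MA q) + (fun q => MB q) : Fin p → Fin p → ℂ) from rfl,
      MultilinearMap.map_add_univ]
    refine Finset.sum_congr rfl fun S _ => ?_
    refine congrArg Matrix.det (funext fun q => funext fun r => ?_)
    simp only [Finset.piecewise, Matrix.of_apply]
    by_cases hq : q ∈ S <;> simp [hq]
  rw [hexpand]
  have hmaps : ∀ S : Finset (Fin p), S ∈ (univ : Finset (Finset (Fin p))) →
      S.card ∈ Finset.range (p + 1) := by
    intro S _
    rw [Finset.mem_range, Nat.lt_succ_iff]
    simpa using Finset.card_le_univ S
  calc ‖(∑ S : Finset (Fin p),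
        (Matrix.of fun q r => if q ∈ S then MA q r else MB q r).det)‖
      ≤ ∑ S : Finset (Fin p),
          ‖(Matrix.of fun q r => if q ∈ S then MA q r else MB q r).det‖ :=
        norm_sum_le _ _
    _ ≤ ∑ S : Finset (Fin p),
          (p.choose S.card : ℝ) * (α ^ (2 * S.card) * β ^ (2 * (p - S.card))) :=
        Finset.sum_le_sum fun S _ =>
          det_piecewise_bound MA MB α β hα hβ hsubA hsubB S
    _ = ∑ s ∈ Finset.range (p + 1), ∑ S ∈ univ.filter (fun S : Finset (Fin p) => S.card = s),
          (p.choose S.card : ℝ) * (α ^ (2 * S.card) * β ^ (2 * (p - S.card))) :=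
        (Finset.sum_fiberwise_of_maps_to hmaps _).symm
    _ = ∑ s ∈ Finset.range (p + 1),
          (p.choose s : ℝ) * ((p.choose s : ℝ) * (α ^ (2 * s) * β ^ (2 * (p - s)))) := by
        refine Finset.sum_congr rfl fun s _ => ?_
        rw [Finset.sum_congr rfl (g := fun _ =>
            (p.choose s : ℝ) * (α ^ (2 * s) * β ^ (2 * (p - s))))
            (fun S hS => by rw [(Finset.mem_filter.mp hS).2])]
        rw [Finset.sum_const]
        have hcount : (univ.filter (fun S : Finset (Fin p) => S.card = s)).card
            = p.choose s := by
          rw [← Finset.powerset_univ, ← Finset.powersetCard_eq_filter,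
            Finset.card_powersetCard, Finset.card_univ, Fintype.card_fin]
        rw [hcount, nsmul_eq_mul]
    _ ≤ (α + β) ^ (2 * p) := sum_bound p α β hα hβ

lemma piZero (n : ℕ) : PropPi n 0 0 := by
  intro p hp hpn a b ha hb v w hv hw
  have h1 : (Matrix.of fun q r => (inner ℂ (v q) (w r) : ℂ) * (0 : Matrix (Fin n) (Fin n) ℂ) (a q) (b r))
      = (0 : Matrix (Fin p) (Fin p) ℂ) := by
    ext q r
    simp
  have hne : Nonempty (Fin p) := ⟨⟨0, hp⟩⟩
  haveI := hne
  rw [h1, Matrix.det_zero]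
  simp only [norm_zero]
  positivity

lemma piSum (n : ℕ) : ∀ (k : ℕ) (A : Fin k → Matrix (Fin n) (Fin n) ℂ) (γ : Fin k → ℝ),
    (∀ l, 0 ≤ γ l) → (∀ l, PropPi n (A l) (γ l)) → PropPi n (∑ l, A l) (∑ l, γ l) := by
  intro k
  induction k with
  | zero =>
    intro A γ hγ hA
    simpa using piZero n
  | succ k ih =>
    intro A γ hγ hA
    rw [Fin.sum_univ_succ (f := A), Fin.sum_univ_succ (f := γ)]
    exact piTwo (hγ 0) (Finset.sum_nonneg fun l _ => hγ _) (hA 0)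
      (ih (fun l => A l.succ) (fun l => γ l.succ) (fun l => hγ _) (fun l => hA _))

end Stmt8Aux

/-- if `Π(A^{(l)}, γ_l)` holds for `l = 1,…,k`, then
`Π(A^{(1)}+⋯+A^{(k)}, γ₁+⋯+γ_k)` holds. -/
theorem stmt8 (n k : ℕ) (A : Fin k → Matrix (Fin n) (Fin n) ℂ) (γ : Fin k → ℝ)
    (hγ : ∀ l, 0 < γ l) (hA : ∀ l, PropPi n (A l) (γ l)) :
    PropPi n (∑ l, A l) (∑ l, γ l) := by
  exact Stmt8Aux.piSum n k A γ (fun l => (hγ l).le) hA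
end

section
/- Let β > 0 and for ε > 0 define Φ(s,ε) = (1/√π) · √(ε f_β(−ε)) / (i s − ε), where f_β(E) = (1+e^{βE})^{-1}. Then s ↦ Φ(s,ε) belongs to L²(ℝ) with ‖Φ(·,ε)‖_{L²} ≤ 1, and for all τ ≥ 0 and ε > 0, ∫_ℝ e^{i s τ} |Φ(s,ε)|² ds = e^{−ετ} f_β(−ε). -/
open MeasureTheory
open Set Real Filter Complex

lemma integrableOn_cexp_Ioi {c : ℂ} (hc : c.re < 0) :
    IntegrableOn (fun t : ℝ => Complex.exp (c * t)) (Ioi 0) := by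
  have h : IntegrableOn (fun t : ℝ => Real.exp (-(-c.re) * t)) (Ioi 0) :=
    exp_neg_integrableOn_Ioi 0 (by linarith)
  refine (h.mono' ?_ ?_)
  · exact (Complex.continuous_exp.comp (by continuity)).aestronglyMeasurable
  · filter_upwards with t
    simp [Complex.norm_exp]

lemma integral_cexp_Ioi {c : ℂ} (hc : c.re < 0) :
    ∫ t in Ioi (0:ℝ), Complex.exp (c * t) = -c⁻¹ := by
  have hc0 : c ≠ 0 := fun h => by simp [h] at hc
  have := integral_Ioi_of_hasDerivAt_of_tendsto' (a := 0)
      (f := fun t : ℝ => c⁻¹ * Complex.exp (c * t))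
      (f' := fun t : ℝ => Complex.exp (c * t)) (m := 0)
      (fun x _ => ?_) (integrableOn_cexp_Ioi hc) ?_
  · simpa using this
  · have : HasDerivAt (fun t : ℝ => Complex.exp (c * t)) (c * Complex.exp (c * x)) x := by
      have := (Complex.hasDerivAt_exp (c * x)).comp x
        ((hasDerivAt_id (x:ℂ)).const_mul c |>.comp_ofReal)
      simpa [mul_comm, Function.comp_def] using this
    have h2 := this.const_mul c⁻¹
    simp only [← mul_assoc, inv_mul_cancel₀ hc0, one_mul] at h2
    exact h2
  · rw [show (0:ℂ) = c⁻¹ * 0 by ring]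
    apply Tendsto.const_mul
    rw [tendsto_zero_iff_norm_tendsto_zero]
    have : (fun t : ℝ => ‖Complex.exp (c * t)‖) = fun t : ℝ => Real.exp (c.re * t) := by
      ext t; simp [Complex.norm_exp]
    rw [this]
    exact Real.tendsto_exp_atBot.comp (tendsto_id.const_mul_atTop_of_neg hc)

lemma integrable_cexp_mul_exp_neg_abs {ε : ℝ} (hε : 0 < ε) (a : ℝ) :
    Integrable (fun t : ℝ =>
      Complex.exp (Complex.I * a * t) * ((Real.exp (-(ε * |t|)) : ℝ) : ℂ)) := by
  set g : ℝ → ℂ := fun t => Complex.exp (Complex.I * a * t) * ((Real.exp (-(ε * |t|)) : ℝ) : ℂ)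
    with hg
  have hc1 : (Complex.I * a - ε).re < 0 := by simp [hε]
  have hc2 : (-(Complex.I * a) - ε).re < 0 := by simp [hε]
  have hIoi_eq : Set.EqOn g (fun t : ℝ => Complex.exp ((Complex.I * a - ε) * t)) (Ioi 0) := by
    intro t ht
    have ht0 : (0:ℝ) ≤ t := le_of_lt ht
    simp only [hg, _root_.abs_of_nonneg ht0]
    rw [Complex.ofReal_exp, ← Complex.exp_add]
    congr 1
    push_cast
    ring
  have hnegIoi_eq : Set.EqOn (fun t : ℝ => g (-t))
      (fun t : ℝ => Complex.exp ((-(Complex.I * a) - ε) * t)) (Ioi 0) := by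
    intro t ht
    have ht0 : (0:ℝ) ≤ t := le_of_lt ht
    simp only [hg, abs_neg, _root_.abs_of_nonneg ht0]
    rw [Complex.ofReal_exp, ← Complex.exp_add]
    congr 1
    push_cast
    ring
  have hInt1 : IntegrableOn g (Ioi 0) :=
    (integrableOn_cexp_Ioi hc1).congr_fun hIoi_eq.symm measurableSet_Ioi
  have hIntNeg : IntegrableOn (fun t : ℝ => g (-t)) (Ioi 0) :=
    (integrableOn_cexp_Ioi hc2).congr_fun hnegIoi_eq.symm measurableSet_Ioi
  have hInt2 : IntegrableOn g (Iic 0) := by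
    have hmp : MeasurePreserving (fun x : ℝ => -x) volume volume :=
      Measure.measurePreserving_neg _
    have hemb : MeasurableEmbedding (fun x : ℝ => -x) :=
      (Homeomorph.neg ℝ).measurableEmbedding
    have hpre : (fun x : ℝ => -x) ⁻¹' Iic 0 = Ici 0 := by ext x; simp
    refine (hmp.integrableOn_comp_preimage hemb (s := Iic (0:ℝ))).mp ?_
    rw [hpre]
    exact (integrableOn_Ici_iff_integrableOn_Ioi).mpr hIntNeg
  rw [← integrableOn_univ, ← Iic_union_Ioi (a := (0:ℝ))]
  exact hInt2.union hInt1

lemma integral_cexp_mul_exp_neg_abs {ε : ℝ} (hε : 0 < ε) (a : ℝ) :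
    ∫ t : ℝ, Complex.exp (Complex.I * a * t) * ((Real.exp (-(ε * |t|)) : ℝ) : ℂ)
      = 2 * ε / (ε^2 + a^2) := by
  set g : ℝ → ℂ := fun t => Complex.exp (Complex.I * a * t) * ((Real.exp (-(ε * |t|)) : ℝ) : ℂ)
    with hg
  have hc1 : (Complex.I * a - ε).re < 0 := by simp [hε]
  have hc2 : (-(Complex.I * a) - ε).re < 0 := by simp [hε]
  have hIoi_eq : Set.EqOn g (fun t : ℝ => Complex.exp ((Complex.I * a - ε) * t)) (Ioi 0) := by
    intro t ht
    have ht0 : (0:ℝ) ≤ t := le_of_lt ht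
    simp only [hg, _root_.abs_of_nonneg ht0]
    rw [Complex.ofReal_exp, ← Complex.exp_add]
    congr 1
    push_cast
    ring
  have hnegIoi_eq : Set.EqOn (fun t : ℝ => g (-t))
      (fun t : ℝ => Complex.exp ((-(Complex.I * a) - ε) * t)) (Ioi 0) := by
    intro t ht
    have ht0 : (0:ℝ) ≤ t := le_of_lt ht
    simp only [hg, abs_neg, _root_.abs_of_nonneg ht0]
    rw [Complex.ofReal_exp, ← Complex.exp_add]
    congr 1
    push_cast
    ring
  have hInt1 : IntegrableOn g (Ioi 0) :=
    (integrableOn_cexp_Ioi hc1).congr_fun hIoi_eq.symm measurableSet_Ioi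
  have hIntNeg : IntegrableOn (fun t : ℝ => g (-t)) (Ioi 0) :=
    (integrableOn_cexp_Ioi hc2).congr_fun hnegIoi_eq.symm measurableSet_Ioi
  have hInt2 : IntegrableOn g (Iic 0) := by
    have hmp : MeasurePreserving (fun x : ℝ => -x) volume volume :=
      Measure.measurePreserving_neg _
    have hemb : MeasurableEmbedding (fun x : ℝ => -x) :=
      (Homeomorph.neg ℝ).measurableEmbedding
    have hpre : (fun x : ℝ => -x) ⁻¹' Iic 0 = Ici 0 := by ext x; simp
    refine (hmp.integrableOn_comp_preimage hemb (s := Iic (0:ℝ))).mp ?_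
    rw [hpre]
    exact (integrableOn_Ici_iff_integrableOn_Ioi).mpr hIntNeg
  have key1 : ∫ t in Ioi (0:ℝ), g t = (ε - Complex.I * a)⁻¹ := by
    rw [setIntegral_congr_fun measurableSet_Ioi hIoi_eq, integral_cexp_Ioi hc1]
    rw [← inv_neg]
    ring_nf
  have key2 : ∫ t in Iic (0:ℝ), g t = (ε + Complex.I * a)⁻¹ := by
    have h0 : ∫ t in Iic (-(0:ℝ)), g t = ∫ t in Ioi (0:ℝ), g (-t) :=
      (integral_comp_neg_Ioi 0 g).symm
    rw [neg_zero] at h0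
    rw [h0, setIntegral_congr_fun measurableSet_Ioi hnegIoi_eq, integral_cexp_Ioi hc2,
      ← inv_neg]
    ring_nf
  have hsplit := intervalIntegral.integral_Iic_add_Ioi (b := (0:ℝ)) hInt2 hInt1
  rw [show integral volume g = ∫ t : ℝ, g t from rfl, ← hsplit, key1, key2]
  have hd1 : (ε : ℂ) - Complex.I * a ≠ 0 := by
    intro h
    have h' := congrArg Complex.re h
    simp at h'
    linarith
  have hd2 : (ε : ℂ) + Complex.I * a ≠ 0 := by
    intro h
    have h' := congrArg Complex.re h
    simp at h'
    linarith
  have hd3 : (ε : ℂ)^2 + (a:ℂ)^2 ≠ 0 := by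
    have : ((ε:ℂ) - Complex.I * a) * ((ε:ℂ) + Complex.I * a) = (ε:ℂ)^2 + (a:ℂ)^2 := by
      ring_nf
      rw [Complex.I_sq]
      ring
    rw [← this]
    exact mul_ne_zero hd1 hd2
  push_cast
  field_simp
  ring_nf
  rw [Complex.I_sq]
  ring

lemma integrable_inv_sq_add {ε : ℝ} (hε : 0 < ε) :
    Integrable (fun s : ℝ => (ε^2 + s^2)⁻¹) := by
  have h := (integrable_inv_one_add_sq.comp_div (R := ε) hε.ne').const_mul (ε^2)⁻¹
  refine h.congr ?_
  filter_upwards with s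
  have h1 : (0:ℝ) < ε^2 + s^2 := by positivity
  field_simp

lemma integral_inv_sq_add {ε : ℝ} (hε : 0 < ε) :
    ∫ s : ℝ, (ε^2 + s^2)⁻¹ = π / ε := by
  have hcong : (fun s : ℝ => (ε^2 + s^2)⁻¹)
      = fun s : ℝ => (ε^2)⁻¹ * (1 + (s / ε)^2)⁻¹ := by
    ext s
    have h1 : (0:ℝ) < ε^2 + s^2 := by positivity
    field_simp
  rw [hcong, integral_const_mul, Measure.integral_comp_div (fun x : ℝ => (1 + x^2)⁻¹) ε,
    integral_univ_inv_one_add_sq, abs_of_pos hε, smul_eq_mul]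
  field_simp

open FourierTransform in
lemma lorentz_fourier {ε : ℝ} (hε : 0 < ε) {τ : ℝ} (hτ : 0 ≤ τ) :
    ∫ s : ℝ, Complex.exp (Complex.I * s * τ) * ((ε^2 + s^2 : ℝ) : ℂ)⁻¹
      = ((π / ε * Real.exp (-(ε * τ)) : ℝ) : ℂ) := by
  set g₀ : ℝ → ℂ := fun t => ((Real.exp (-(ε * |t|)) : ℝ) : ℂ) with hg₀
  have hg₀int : Integrable g₀ := by
    have h := integrable_cexp_mul_exp_neg_abs hε 0
    refine h.congr ?_
    filter_upwards with t
    simp [hg₀]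
  have hF : 𝓕 g₀ = fun w : ℝ => ((2 * ε * (ε^2 + (2*π*w)^2)⁻¹ : ℝ) : ℂ) := by
    ext w
    rw [Real.fourier_real_eq_integral_exp_smul]
    have hcong : (fun v : ℝ => Complex.exp (↑(-2 * π * v * w) * Complex.I) • g₀ v)
        = fun v : ℝ => Complex.exp (Complex.I * (-(2*π*w) : ℝ) * v) *
            ((Real.exp (-(ε * |v|)) : ℝ) : ℂ) := by
      ext v
      rw [smul_eq_mul]
      congr 1
      push_cast
      ring
    rw [hcong, integral_cexp_mul_exp_neg_abs hε (-(2*π*w))]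
    push_cast
    ring
  have hFint : Integrable (𝓕 g₀) := by
    rw [hF]
    apply Integrable.ofReal
    exact ((integrable_inv_sq_add hε).comp_mul_left' (R := 2*π)
      (by positivity : (2*π:ℝ) ≠ 0)).const_mul (2*ε)
  have hcontg : Continuous g₀ := by
    apply Complex.continuous_ofReal.comp
    exact Real.continuous_exp.comp (by continuity)
  have hinv := hg₀int.fourierInv_fourier_eq hFint (hcontg.continuousAt (x := τ))
  rw [Real.fourierInv_eq'] at hinv
  simp only [RCLike.inner_apply, conj_trivial, hF, smul_eq_mul] at hinv
  set F : ℝ → ℂ := fun s => Complex.exp (Complex.I * s * τ) * ((ε^2 + s^2 : ℝ) : ℂ)⁻¹ with hFdef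
  have hcong2 : (fun v : ℝ => Complex.exp (((2*π*(τ*v) : ℝ) : ℂ) * Complex.I) *
      ((2 * ε * (ε^2 + (2*π*v)^2)⁻¹ : ℝ) : ℂ)) = fun v : ℝ => (2*ε : ℂ) * F (2*π*v) := by
    ext v
    simp only [hFdef]
    rw [show (((2*π*(τ*v) : ℝ)) : ℂ) * Complex.I
        = Complex.I * ((2*π*v : ℝ) : ℂ) * (τ:ℂ) by push_cast; ring]
    push_cast
    ring
  rw [hcong2, integral_const_mul, Measure.integral_comp_mul_left F (2*π),
    abs_of_pos (by positivity : (0:ℝ) < (2*π)⁻¹), real_smul] at hinv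
  have hg₀τ : g₀ τ = ((Real.exp (-(ε*τ)) : ℝ) : ℂ) := by
    simp [hg₀, _root_.abs_of_nonneg hτ]
  rw [hg₀τ] at hinv
  have hεc : (ε:ℂ) ≠ 0 := by exact_mod_cast hε.ne'
  have hπc : ((π:ℝ):ℂ) ≠ 0 := by exact_mod_cast Real.pi_pos.ne'
  push_cast at hinv ⊢
  field_simp at hinv ⊢
  rw [show integral volume F = ∫ y : ℝ, F y from rfl]
  linear_combination hinv

/-- `Φ(s,ε) = (1/√π)·√(ε f_β(−ε)) / (i s − ε)`. -/
noncomputable def PhiFn (β s ε : ℝ) : ℂ :=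
  ((1 / Real.sqrt Real.pi : ℝ) : ℂ) * ((Real.sqrt (ε * fermiF β (-ε)) : ℝ) : ℂ) /
    (Complex.I * (s : ℂ) - (ε : ℂ))

/-- for `β > 0` and `ε > 0`, `s ↦ Φ(s,ε)` is in `L²(ℝ)` with
`‖Φ(·,ε)‖_{L²} ≤ 1`, and for all `τ ≥ 0`,
`∫ e^{isτ} |Φ(s,ε)|² ds = e^{−ετ} f_β(−ε)`. -/
theorem stmt13 (β : ℝ) (hβ : 0 < β) (ε : ℝ) (hε : 0 < ε) :
    MemLp (fun s : ℝ => PhiFn β s ε) 2 volume ∧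
      eLpNorm (fun s : ℝ => PhiFn β s ε) 2 volume ≤ 1 ∧
      ∀ τ : ℝ, 0 ≤ τ →
        ∫ s : ℝ, Complex.exp (Complex.I * (s : ℂ) * (τ : ℂ)) *
            ((‖PhiFn β s ε‖ : ℝ) : ℂ) ^ 2 =
          ((Real.exp (-ε * τ) * fermiF β (-ε) : ℝ) : ℂ) := by
  have hexp : 0 < Real.exp (β * (-ε)) := Real.exp_pos _
  set f : ℝ := fermiF β (-ε) with hf
  have hf0 : 0 < f := by rw [hf, fermiF]; positivity
  have hf1 : f ≤ 1 := by
    rw [hf, fermiF]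
    have h1 : (1:ℝ) ≤ 1 + Real.exp (β * (-ε)) := by linarith
    exact inv_le_one_of_one_le₀ h1
  have hεf : (0:ℝ) ≤ ε * f := by positivity
  have hden : ∀ s : ℝ, Complex.I * (s:ℂ) - (ε:ℂ) ≠ 0 := by
    intro s h
    have h' := congrArg Complex.re h
    simp at h'
    exact hε.ne' h'
  have habs : ∀ s : ℝ, (‖PhiFn β s ε‖)^2 = (ε * f / π) * (ε^2 + s^2)⁻¹ := by
    intro s
    rw [PhiFn, norm_div, div_pow, ← hf]
    have hns : Complex.normSq (Complex.I * (s:ℂ) - (ε:ℂ)) = ε^2 + s^2 := by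
      simp [Complex.normSq_apply]
      ring
    rw [Complex.sq_norm, Complex.sq_norm, hns]
    have hnum : Complex.normSq (((1 / Real.sqrt π : ℝ) : ℂ) *
        ((Real.sqrt (ε * f) : ℝ) : ℂ)) = ε * f / π := by
      rw [← Complex.sq_norm, norm_mul, Complex.norm_real, Complex.norm_real, Real.norm_eq_abs,
        Real.norm_eq_abs, mul_pow]
      rw [_root_.abs_of_nonneg (by positivity : (0:ℝ) ≤ 1 / Real.sqrt π),
        _root_.abs_of_nonneg (Real.sqrt_nonneg _)]
      rw [Real.sq_sqrt hεf, div_pow, one_pow, Real.sq_sqrt Real.pi_pos.le]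
      ring
    rw [hnum, div_eq_mul_inv]
  have hnorm : ∀ s : ℝ, ‖PhiFn β s ε‖^2 = (ε * f / π) * (ε^2 + s^2)⁻¹ := by
    intro s
    rw [habs]
  have hcont : Continuous (fun s : ℝ => PhiFn β s ε) := by
    unfold PhiFn
    exact continuous_const.div (by continuity) hden
  have hint2 : Integrable (fun s : ℝ => ‖PhiFn β s ε‖^2) := by
    refine ((integrable_inv_sq_add hε).const_mul (ε * f / π)).congr ?_
    filter_upwards with s
    exact (hnorm s).symm
  have hmem : MemLp (fun s : ℝ => PhiFn β s ε) 2 volume :=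
    (memLp_two_iff_integrable_sq_norm hcont.aestronglyMeasurable).mpr hint2
  have hval : ∫ s : ℝ, ‖PhiFn β s ε‖^2 = f := by
    rw [integral_congr_ae (Filter.Eventually.of_forall hnorm), integral_const_mul,
      integral_inv_sq_add hε]
    field_simp
  refine ⟨hmem, ?_, ?_⟩
  · rw [hmem.eLpNorm_eq_integral_rpow_norm (by norm_num) (by norm_num)]
    have h2 : ((2:ENNReal)).toReal = (2:ℝ) := by norm_num
    rw [h2]
    have hrw : ∫ s : ℝ, ‖PhiFn β s ε‖ ^ (2:ℝ) = f := by
      rw [← hval]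
      apply integral_congr_ae
      filter_upwards with s
      rw [← Real.rpow_natCast ‖PhiFn β s ε‖ 2]
      norm_num
    rw [hrw]
    refine ENNReal.ofReal_le_one.mpr ?_
    calc f ^ (2:ℝ)⁻¹ ≤ 1 ^ (2:ℝ)⁻¹ :=
          Real.rpow_le_rpow hf0.le hf1 (by norm_num)
      _ = 1 := Real.one_rpow _
  · intro τ hτ
    have hcong : (fun s : ℝ => Complex.exp (Complex.I * (s : ℂ) * (τ : ℂ)) *
        ((‖PhiFn β s ε‖ : ℝ) : ℂ) ^ 2)
        = fun s : ℝ => ((ε * f / π : ℝ) : ℂ) *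
          (Complex.exp (Complex.I * (s : ℂ) * (τ : ℂ)) * ((ε^2 + s^2 : ℝ) : ℂ)⁻¹) := by
      ext s
      rw [show (((‖PhiFn β s ε‖ : ℝ) : ℂ)) ^ 2
          = (((‖PhiFn β s ε‖)^2 : ℝ) : ℂ) by push_cast; ring]
      rw [habs s]
      push_cast
      ring
    rw [hcong, integral_const_mul, lorentz_fourier hε hτ]
    have hπ : (π:ℝ) ≠ 0 := Real.pi_pos.ne'
    have hre : ε * f / π * (π / ε * Real.exp (-(ε * τ))) = Real.exp (-ε * τ) * f := by
      rw [show -ε * τ = -(ε * τ) by ring]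
      field_simp
    rw [← Complex.ofReal_mul, hre]
end

section
/- Let X be a set and let C be an (X×X)-matrix with a Gram representation (H,v,w) with Gram constant γ. Let n ∈ ℕ and let P be a complex Hermitian positive semidefinite n×n matrix with P_{ii} ≤ 1 for all i. Then for all x_1,…,x_n, y_1,…,y_n ∈ X, |det((C(x_i,y_j)·P_{ij})_{i,j=1}^n)| ≤ γ^{2n}. -/
open scoped ComplexOrder

open Module Finset
open scoped Matrix

private lemma sum_fin_dite {α : Type*} [AddCommMonoid α] {m n : ℕ} (h : m ≤ n)
    (g : Fin m → α) :
    (∑ k : Fin n, if h' : (k : ℕ) < m then g ⟨k, h'⟩ else 0) = ∑ k : Fin m, g k := by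
  have h1 : (∑ k : Fin n, if h' : (k : ℕ) < m then g ⟨k, h'⟩ else 0)
      = ∑ t ∈ Finset.range n, (fun t => if h' : t < m then g ⟨t, h'⟩ else 0) t := by
    rw [← Fin.sum_univ_eq_sum_range (fun t => if h' : t < m then g ⟨t, h'⟩ else 0) n]
  have h2 : (∑ k : Fin m, g k)
      = ∑ t ∈ Finset.range m, (fun t => if h' : t < m then g ⟨t, h'⟩ else 0) t := by
    rw [← Fin.sum_univ_eq_sum_range]
    apply Finset.sum_congr rfl
    intro k _
    simp [k.isLt]
  rw [h1, h2]
  exact (Finset.sum_subset (Finset.range_subset_range.2 h)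
    (fun t _ ht => dif_neg (by simpa using ht))).symm

private lemma abs_det_toMatrix_le {E : Type*} [NormedAddCommGroup E] [InnerProductSpace ℂ E]
    [FiniteDimensional ℂ E] {n : ℕ} (hn : finrank ℂ E = n)
    (b : OrthonormalBasis (Fin n) ℂ E) (f : Fin n → E) :
    ‖Matrix.det (b.toBasis.toMatrix f)‖ ≤ ∏ i, ‖f i‖ := by
  classical
  have hcard : finrank ℂ E = Fintype.card (Fin n) := by simpa using hn
  have hwf : WellFoundedLT (Fin n) := inferInstance
  set gb := InnerProductSpace.gramSchmidtOrthonormalBasis (𝕜 := ℂ) hcard f with hgb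
  have hsplit : b.toBasis.toMatrix f = b.toBasis.toMatrix gb.toBasis * gb.toBasis.toMatrix f :=
    (Basis.toMatrix_mul_toMatrix _ _ _).symm
  have hunit : ‖Matrix.det (b.toBasis.toMatrix gb.toBasis)‖ = 1 := by
    have h1 : (b.toBasis.toMatrix gb.toBasis)ᴴ * b.toBasis.toMatrix gb.toBasis = 1 := by
      have := b.toMatrix_orthonormalBasis_conjTranspose_mul_self gb
      rwa [← gb.coe_toBasis] at this
    have h2 := congrArg Matrix.det h1
    rw [Matrix.det_mul, Matrix.det_conjTranspose, Matrix.det_one] at h2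
    have h3 := congrArg norm h2
    rw [norm_mul, RCLike.star_def, Complex.norm_conj, norm_one] at h3
    nlinarith [norm_nonneg (Matrix.det (b.toBasis.toMatrix gb.toBasis))]
  have hgs : ‖Matrix.det (gb.toBasis.toMatrix f)‖ ≤ ∏ i, ‖f i‖ := by
    have h1 : Matrix.det (gb.toBasis.toMatrix f) = ∏ i, (inner ℂ (gb i) (f i) : ℂ) := by
      rw [← Basis.det_apply]
      exact InnerProductSpace.gramSchmidtOrthonormalBasis_det hcard f
    rw [h1, norm_prod]
    apply Finset.prod_le_prod (fun i _ => norm_nonneg _)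
    intro i _
    calc ‖(inner ℂ (gb i) (f i) : ℂ)‖ = ‖(inner ℂ (gb i) (f i) : ℂ)‖ := rfl
      _ ≤ ‖gb i‖ * ‖f i‖ := norm_inner_le_norm _ _
      _ = ‖f i‖ := by rw [gb.orthonormal.1 i, one_mul]
  calc ‖Matrix.det (b.toBasis.toMatrix f)‖
      = ‖Matrix.det (b.toBasis.toMatrix gb.toBasis)‖
        * ‖Matrix.det (gb.toBasis.toMatrix f)‖ := by
        rw [hsplit, Matrix.det_mul, norm_mul]
    _ ≤ ∏ i, ‖f i‖ := by rw [hunit, one_mul]; exact hgs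

private lemma abs_det_le_prod_col {n : ℕ} (A : Matrix (Fin n) (Fin n) ℂ) :
    ‖A.det‖ ^ 2 ≤ ∏ i, ∑ k, ‖A k i‖ ^ 2 := by
  classical
  set f : Fin n → EuclideanSpace ℂ (Fin n) := fun i => WithLp.toLp 2 (fun k => A k i) with hf
  have hA : (EuclideanSpace.basisFun (Fin n) ℂ).toBasis.toMatrix f = A := by
    ext k i
    rw [Basis.toMatrix_apply]
    simp [f, EuclideanSpace.basisFun_repr]
  have h := abs_det_toMatrix_le finrank_euclideanSpace_fin (EuclideanSpace.basisFun (Fin n) ℂ) f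
  rw [hA] at h
  have hnorm : ∀ i, ‖f i‖ ^ 2 = ∑ k, ‖A k i‖ ^ 2 := by
    intro i
    rw [EuclideanSpace.norm_eq, Real.sq_sqrt (by positivity)]
  calc ‖A.det‖ ^ 2 ≤ (∏ i, ‖f i‖) ^ 2 :=
        pow_le_pow_left₀ (norm_nonneg _) h 2
    _ = ∏ i, ‖f i‖ ^ 2 := by rw [← Finset.prod_pow]
    _ = ∏ i, ∑ k, ‖A k i‖ ^ 2 := by
        exact Finset.prod_congr rfl fun i _ => hnorm i

private lemma gram_det_sq_le {E : Type*} [NormedAddCommGroup E] [InnerProductSpace ℂ E]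
    {n : ℕ} (u z : Fin n → E) :
    ‖Matrix.det (Matrix.of fun i j => (inner ℂ (u i) (z j) : ℂ))‖ ^ 2 ≤
      (∏ i, ‖u i‖ ^ 2) * ∏ j, ‖z j‖ ^ 2 := by
  classical
  set W : Submodule ℂ E := Submodule.span ℂ (Set.range z) with hW
  haveI : FiniteDimensional ℂ W := FiniteDimensional.span_of_finite ℂ (Set.finite_range z)
  set m := finrank ℂ W with hm
  have hmn : m ≤ n := by
    have := finrank_range_le_card (R := ℂ) z
    simpa [Set.finrank, hm, hW] using this
  set b := stdOrthonormalBasis ℂ W with hb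
  set e : Fin n → E := fun k => if h : (k : ℕ) < m then ((b ⟨k, h⟩ : W) : E) else 0 with he
  have hon : Orthonormal ℂ (fun k : Fin m => ((b k : W) : E)) :=
    b.orthonormal.comp_linearIsometry W.subtypeₗᵢ
  have hzmem : ∀ j, z j ∈ W := fun j => Submodule.subset_span (Set.mem_range_self j)
  have hzexp : ∀ j, z j = ∑ k : Fin m, (inner ℂ ((b k : W) : E) (z j) : ℂ) • ((b k : W) : E) := by
    intro j
    have h1 : (⟨z j, hzmem j⟩ : W) = ∑ k : Fin m, b.repr ⟨z j, hzmem j⟩ k • b k :=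
      (b.sum_repr _).symm
    have h2 := congrArg (fun w : W => (w : E)) h1
    simp only [Submodule.coe_sum, SetLike.val_smul] at h2
    convert h2 using 2 with k
    rw [b.repr_apply_apply]
    rfl
  set A : Matrix (Fin n) (Fin n) ℂ := Matrix.of fun k i => (inner ℂ (e k) (u i) : ℂ) with hA
  set B : Matrix (Fin n) (Fin n) ℂ := Matrix.of fun k j => (inner ℂ (e k) (z j) : ℂ) with hB
  have hMAB : (Matrix.of fun i j => (inner ℂ (u i) (z j) : ℂ)) = Aᴴ * B := by
    ext i j
    rw [Matrix.mul_apply]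
    have hterm : ∀ k : Fin n, (Aᴴ) i k * B k j =
        (if h : (k : ℕ) < m then
          (inner ℂ (u i) ((b ⟨k, h⟩ : W) : E) : ℂ) * (inner ℂ ((b ⟨k, h⟩ : W) : E) (z j) : ℂ)
        else 0) := by
      intro k
      by_cases h : (k : ℕ) < m
      · rw [dif_pos h]
        simp only [Matrix.conjTranspose_apply, hA, hB, Matrix.of_apply, he, dif_pos h,
          RCLike.star_def, inner_conj_symm]
      · rw [dif_neg h]
        simp only [Matrix.conjTranspose_apply, hA, hB, Matrix.of_apply, he, dif_neg h]
        simp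
    rw [Finset.sum_congr rfl (fun k _ => hterm k),
      sum_fin_dite hmn (g := fun k : Fin m =>
        (inner ℂ (u i) ((b k : W) : E) : ℂ) * (inner ℂ ((b k : W) : E) (z j) : ℂ))]
    have hexp : (inner ℂ (u i) (z j) : ℂ)
        = ∑ k : Fin m, (inner ℂ (u i) ((b k : W) : E) : ℂ) * (inner ℂ ((b k : W) : E) (z j) : ℂ) := by
      conv_lhs => rw [hzexp j]
      rw [inner_sum]
      exact Finset.sum_congr rfl fun k _ => by rw [inner_smul_right]; ring
    simpa using hexp
  have hAcol : ∀ i, (∑ k, ‖A k i‖ ^ 2) ≤ ‖u i‖ ^ 2 := by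
    intro i
    have h1 : (∑ k : Fin n, ‖A k i‖ ^ 2)
        = ∑ k : Fin m, ‖(inner ℂ ((b k : W) : E) (u i) : ℂ)‖ ^ 2 := by
      rw [← sum_fin_dite hmn (g := fun k : Fin m => ‖(inner ℂ ((b k : W) : E) (u i) : ℂ)‖ ^ 2)]
      apply Finset.sum_congr rfl
      intro k _
      by_cases h : (k : ℕ) < m
      · rw [dif_pos h]; simp [hA, he, dif_pos h]
      · rw [dif_neg h]; simp [hA, he, dif_neg h]
    rw [h1]
    exact hon.sum_inner_products_le (u i)
  have hBcol : ∀ j, (∑ k, ‖B k j‖ ^ 2) ≤ ‖z j‖ ^ 2 := by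
    intro j
    have h1 : (∑ k : Fin n, ‖B k j‖ ^ 2)
        = ∑ k : Fin m, ‖(inner ℂ ((b k : W) : E) (z j) : ℂ)‖ ^ 2 := by
      rw [← sum_fin_dite hmn (g := fun k : Fin m => ‖(inner ℂ ((b k : W) : E) (z j) : ℂ)‖ ^ 2)]
      apply Finset.sum_congr rfl
      intro k _
      by_cases h : (k : ℕ) < m
      · rw [dif_pos h]; simp [hB, he, dif_pos h]
      · rw [dif_neg h]; simp [hB, he, dif_neg h]
    rw [h1]
    exact hon.sum_inner_products_le (z j)
  rw [hMAB, Matrix.det_mul, norm_mul, mul_pow]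
  have hA2 : ‖Matrix.det Aᴴ‖ ^ 2 ≤ ∏ i, ‖u i‖ ^ 2 := by
    rw [Matrix.det_conjTranspose]
    calc ‖star A.det‖ ^ 2 = ‖A.det‖ ^ 2 := by
          rw [RCLike.star_def, Complex.norm_conj]
      _ ≤ ∏ i, ∑ k, ‖A k i‖ ^ 2 := abs_det_le_prod_col A
      _ ≤ ∏ i, ‖u i‖ ^ 2 :=
          Finset.prod_le_prod (fun i _ => by positivity) (fun i _ => hAcol i)
  have hB2 : ‖Matrix.det B‖ ^ 2 ≤ ∏ j, ‖z j‖ ^ 2 := by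
    calc ‖B.det‖ ^ 2 ≤ ∏ j, ∑ k, ‖B k j‖ ^ 2 := abs_det_le_prod_col B
      _ ≤ ∏ j, ‖z j‖ ^ 2 :=
          Finset.prod_le_prod (fun j _ => by positivity) (fun j _ => hBcol j)
  exact mul_le_mul hA2 hB2 (by positivity) (Finset.prod_nonneg fun i _ => by positivity)

/-- if `C` has a Gram representation `(H, v, w)` with Gram constant `γ`
and `P` is a complex Hermitian positive semidefinite `n×n` matrix with diagonal
entries `≤ 1`, then `|det((C(x_i,y_j)·P_{ij})_{i,j})| ≤ γ^(2n)`. -/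
theorem stmt15 {X : Type*} (C : X → X → ℂ)
    {H : Type*} [NormedAddCommGroup H] [InnerProductSpace ℂ H] [CompleteSpace H]
    (v w : X → H) (γ : ℝ)
    (hrep : ∀ x x' : X, C x x' = inner ℂ (v x) (w x'))
    (hb : ∀ x : X, max ‖v x‖ ‖w x‖ ≤ γ)
    (n : ℕ) (P : Matrix (Fin n) (Fin n) ℂ)
    (hP : P.PosSemidef) (hdiag : ∀ i, (P i i).re ≤ 1)
    (x y : Fin n → X) :
    ‖Matrix.det (Matrix.of fun i j => C (x i) (y j) * P i j)‖ ≤ γ ^ (2 * n) := by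
  classical
  obtain ⟨A, hPA⟩ : ∃ A : Matrix (Fin n) (Fin n) ℂ, P = Aᴴ * A := by
    open scoped MatrixOrder in exact CStarAlgebra.nonneg_iff_eq_star_mul_self.mp hP.nonneg
  set u : Fin n → PiLp 2 (fun _ : Fin n => H) := fun i => WithLp.toLp 2 (fun k => A k i • v (x i)) with hu
  set z : Fin n → PiLp 2 (fun _ : Fin n => H) := fun j => WithLp.toLp 2 (fun k => A k j • w (y j)) with hz
  have hPij : ∀ i j, P i j = ∑ k, (starRingEnd ℂ) (A k i) * A k j := by
    intro i j
    rw [hPA, Matrix.mul_apply]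
    exact Finset.sum_congr rfl fun k _ => by rw [Matrix.conjTranspose_apply]; rfl
  have key : ∀ i j, (inner ℂ (u i) (z j) : ℂ) = C (x i) (y j) * P i j := by
    intro i j
    rw [PiLp.inner_apply]
    have hterm : ∀ k : Fin n, (inner ℂ (u i k) (z j k) : ℂ)
        = (starRingEnd ℂ) (A k i) * A k j * inner ℂ (v (x i)) (w (y j)) := by
      intro k
      rw [hu, hz]
      simp only [PiLp.toLp_apply, inner_smul_left, inner_smul_right]
      ring
    rw [Finset.sum_congr rfl fun k _ => hterm k, ← Finset.sum_mul, hrep, hPij]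
    ring
  have hM : (Matrix.of fun i j => C (x i) (y j) * P i j)
      = Matrix.of fun i j => (inner ℂ (u i) (z j) : ℂ) := by
    ext i j
    simp only [Matrix.of_apply]
    rw [key]
  have hγv : ∀ i, ‖v (x i)‖ ≤ γ := fun i => le_trans (le_max_left _ _) (hb (x i))
  have hγw : ∀ j, ‖w (y j)‖ ≤ γ := fun j => le_trans (le_max_right _ _) (hb (y j))
  have hγ0 : ∀ i : Fin n, (0:ℝ) ≤ γ := fun i => le_trans (norm_nonneg _) (hγv i)
  have hnormu : ∀ i, ‖u i‖ ^ 2 ≤ γ ^ 2 := by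
    intro i
    have h1 : (inner ℂ (u i) (u i) : ℂ) = P i i * ((‖v (x i)‖ : ℂ)) ^ 2 := by
      rw [PiLp.inner_apply]
      have hterm : ∀ k : Fin n, (inner ℂ (u i k) (u i k) : ℂ)
          = (starRingEnd ℂ) (A k i) * A k i * inner ℂ (v (x i)) (v (x i)) := by
        intro k
        rw [hu]
        simp only [PiLp.toLp_apply, inner_smul_left, inner_smul_right]
        ring
      rw [Finset.sum_congr rfl fun k _ => hterm k, ← Finset.sum_mul, ← hPij,
        inner_self_eq_norm_sq_to_K]
      norm_num
    have h2 : (‖u i‖ : ℝ) ^ 2 = (P i i).re * ‖v (x i)‖ ^ 2 := by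
      have h3 : ‖u i‖ ^ 2 = Complex.re (inner ℂ (u i) (u i) : ℂ) :=
        (inner_self_eq_norm_sq (𝕜 := ℂ) (u i)).symm
      rw [h3, h1, ← Complex.ofReal_pow, mul_comm, Complex.re_ofReal_mul, mul_comm]
    rw [h2]
    calc (P i i).re * ‖v (x i)‖ ^ 2 ≤ 1 * γ ^ 2 :=
          mul_le_mul (hdiag i) (pow_le_pow_left₀ (norm_nonneg _) (hγv i) 2)
            (by positivity) zero_le_one
      _ = γ ^ 2 := one_mul _
  have hnormz : ∀ j, ‖z j‖ ^ 2 ≤ γ ^ 2 := by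
    intro j
    have h1 : (inner ℂ (z j) (z j) : ℂ) = P j j * ((‖w (y j)‖ : ℂ)) ^ 2 := by
      rw [PiLp.inner_apply]
      have hterm : ∀ k : Fin n, (inner ℂ (z j k) (z j k) : ℂ)
          = (starRingEnd ℂ) (A k j) * A k j * inner ℂ (w (y j)) (w (y j)) := by
        intro k
        rw [hz]
        simp only [PiLp.toLp_apply, inner_smul_left, inner_smul_right]
        ring
      rw [Finset.sum_congr rfl fun k _ => hterm k, ← Finset.sum_mul, ← hPij,
        inner_self_eq_norm_sq_to_K]
      norm_num
    have h2 : (‖z j‖ : ℝ) ^ 2 = (P j j).re * ‖w (y j)‖ ^ 2 := by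
      have h3 : ‖z j‖ ^ 2 = Complex.re (inner ℂ (z j) (z j) : ℂ) :=
        (inner_self_eq_norm_sq (𝕜 := ℂ) (z j)).symm
      rw [h3, h1, ← Complex.ofReal_pow, mul_comm, Complex.re_ofReal_mul, mul_comm]
    rw [h2]
    calc (P j j).re * ‖w (y j)‖ ^ 2 ≤ 1 * γ ^ 2 :=
          mul_le_mul (hdiag j) (pow_le_pow_left₀ (norm_nonneg _) (hγw j) 2)
            (by positivity) zero_le_one
      _ = γ ^ 2 := one_mul _
  have hsq := gram_det_sq_le u z
  rw [← hM] at hsq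
  have hbound : ‖Matrix.det (Matrix.of fun i j => C (x i) (y j) * P i j)‖ ^ 2
      ≤ (γ ^ (2 * n)) ^ 2 := by
    calc ‖Matrix.det (Matrix.of fun i j => C (x i) (y j) * P i j)‖ ^ 2
        ≤ (∏ i, ‖u i‖ ^ 2) * ∏ j, ‖z j‖ ^ 2 := hsq
      _ ≤ (∏ _i : Fin n, γ ^ 2) * ∏ _j : Fin n, γ ^ 2 := by
          apply mul_le_mul
          · exact Finset.prod_le_prod (fun i _ => by positivity) (fun i _ => hnormu i)
          · exact Finset.prod_le_prod (fun j _ => by positivity) (fun j _ => hnormz j)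
          · exact Finset.prod_nonneg fun j _ => by positivity
          · exact Finset.prod_nonneg fun i _ => by positivity
      _ = (γ ^ (2 * n)) ^ 2 := by
          simp only [Finset.prod_const, Finset.card_univ, Fintype.card_fin]
          ring
  have hpow : (0:ℝ) ≤ γ ^ (2 * n) := by
    rw [pow_mul]
    positivity
  nlinarith [norm_nonneg (Matrix.det (Matrix.of fun i j => C (x i) (y j) * P i j))]
end
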